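/- arXiv:2306.02341 — 5 statements merged into one kernel-verified Lean document; each statement's English description precedes it below -/
import Mathlib

section
/- Let T > 0. There exists a constant C > 0 (depending only on T, d, ν_S, ν_I, γ, λ*, β*, c₀, C₀) such that for every integer n ≥ 1 (with ε = 1/n) and every solution (S, F, I) of the deterministic ε-system on [0,T] whose initial data are cell averages of (S̄₀, Ī₀) and which satisfies S(t,x) ≥ 0, I(t,x) ≥ 0, F(t,x) ≥ 0 and S(t,x) + I(t,x) > 0 for all (t,x), one has sup_{x ∈ D_ε} S(t,x) ≤ C and sup_{x ∈ D_ε} I(t,x) ≤ C for all t ∈ [0,T]. -/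
open MeasureTheory Set

abbrev Grid (d n : ℕ) := Fin d → ZMod n

/-- Discrete Laplacian on the grid of mesh `ε = 1/n` (the factor `(n:ℝ)^2` is `ε⁻²`). -/
noncomputable def discLap (d n : ℕ) (f : Grid d n → ℝ) (x : Grid d n) : ℝ :=
  (n : ℝ) ^ 2 * ∑ i : Fin d,
    (f (Function.update x i (x i + 1)) - 2 * f x + f (Function.update x i (x i - 1)))

/-- Matrix of the discrete Laplacian. -/
noncomputable def lapMat (d n : ℕ) [NeZero n] : Matrix (Grid d n) (Grid d n) ℝ :=
  Matrix.of fun x y => discLap d n (fun z => if z = y then 1 else 0) x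

/-- `heatKer d n ν s t y x = (e^{(t-s) ν Δ_ε})_{y,x}`. -/
noncomputable def heatKer (d n : ℕ) [NeZero n] (ν s t : ℝ) (y x : Grid d n) : ℝ :=
  NormedSpace.exp ((t - s) • ν • lapMat d n) y x

/-- The half-open cube of side `1/n` based at grid point `x`, as a subset of `ℝ^d`. -/
noncomputable def cell (d n : ℕ) (x : Grid d n) : Set (Fin d → ℝ) :=
  Set.univ.pi fun i => Set.Ico (((x i).val : ℝ) / n) ((((x i).val : ℝ) + 1) / n)

/-- Cell average `ε^{-d} ∫_{V_ε(x)} f(y) dy`. -/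
noncomputable def cellAvg (d n : ℕ) (f : (Fin d → ℝ) → ℝ) (x : Grid d n) : ℝ :=
  (n : ℝ) ^ d * ∫ y in cell d n x, f y

/-- The force of infection `Γ(t,x) = B(t,x)^{-γ} Σ_y β_ε^{x,y}(t) F(t,y)`. -/
noncomputable def gam (d n : ℕ) [NeZero n] (γ : ℝ) (βe : ℝ → Grid d n → Grid d n → ℝ)
    (S I F : ℝ → Grid d n → ℝ) (t : ℝ) (x : Grid d n) : ℝ :=
  (S t x + I t x) ^ (-γ) * ∑ y, βe t x y * F t y

/-- `(S,F,I)` solves the deterministic `ε`-system on `[0,T]`. -/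
noncomputable def IsSolution (d n : ℕ) [NeZero n] (νS νI γ : ℝ) (lam lam0 : ℝ → ℝ)
    (βe : ℝ → Grid d n → Grid d n → ℝ) (T : ℝ) (S F I : ℝ → Grid d n → ℝ) : Prop :=
  (∀ x, ContinuousOn (fun t => S t x) (Icc 0 T)) ∧
  (∀ x, ContinuousOn (fun t => F t x) (Icc 0 T)) ∧
  (∀ x, ContinuousOn (fun t => I t x) (Icc 0 T)) ∧
  (∀ t ∈ Icc (0:ℝ) T, ∀ x,
    S t x = S 0 x - (∫ s in (0:ℝ)..t, S s x * gam d n γ βe S I F s x)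
      + νS * ∫ s in (0:ℝ)..t, discLap d n (S s) x) ∧
  (∀ t ∈ Icc (0:ℝ) T, ∀ x,
    F t x = lam0 t * (∑ y, I 0 y * heatKer d n νI 0 t y x)
      + ∑ y, ∫ s in (0:ℝ)..t,
          lam (t - s) * (S s y * gam d n γ βe S I F s y) * heatKer d n νI s t y x) ∧
  (∀ t ∈ Icc (0:ℝ) T, ∀ x,
    I t x = I 0 x + (∫ s in (0:ℝ)..t, S s x * gam d n γ βe S I F s x)
      + νI * ∫ s in (0:ℝ)..t, discLap d n (I s) x)


open scoped Nat

namespace SirAux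

variable {X : Type*} [Fintype X] [DecidableEq X] [Nonempty X]

lemma exists_entry_bound (A : Matrix X X ℝ) : ∃ a : ℝ, 0 ≤ a ∧ ∀ i j, |A i j| ≤ a := by
  refine ⟨∑ i : X, ∑ j : X, |A i j|, by positivity, fun i j => ?_⟩
  calc |A i j| ≤ ∑ j' : X, |A i j'| :=
        Finset.single_le_sum (f := fun j' => |A i j'|) (fun j' _ => abs_nonneg _)
          (Finset.mem_univ j)
    _ ≤ ∑ i' : X, ∑ j' : X, |A i' j'| :=
        Finset.single_le_sum (f := fun i' => ∑ j' : X, |A i' j'|)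
          (fun i' _ => Finset.sum_nonneg fun j' _ => abs_nonneg _) (Finset.mem_univ i)

lemma matPow_entry_bound (A : Matrix X X ℝ) {a : ℝ} (ha0 : 0 ≤ a) (ha : ∀ i j, |A i j| ≤ a) :
    ∀ (k : ℕ) (i j : X), |(A ^ k) i j| ≤ (a * Fintype.card X) ^ k := by
  intro k
  induction k with
  | zero =>
    intro i j
    simp only [pow_zero, Matrix.one_apply]
    split <;> norm_num
  | succ k ih =>
    intro i j
    rw [pow_succ, Matrix.mul_apply]
    calc |∑ l, (A ^ k) i l * A l j| ≤ ∑ l, |(A ^ k) i l * A l j| := Finset.abs_sum_le_sum_abs _ _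
      _ ≤ ∑ _l : X, (a * Fintype.card X) ^ k * a := by
          refine Finset.sum_le_sum fun l _ => ?_
          rw [abs_mul]
          exact mul_le_mul (ih i l) (ha l j) (abs_nonneg _) (by positivity)
      _ = (a * Fintype.card X) ^ k * a * Fintype.card X := by
          rw [Finset.sum_const, Finset.card_univ, nsmul_eq_mul]; ring
      _ = (a * Fintype.card X) ^ (k + 1) := by ring

lemma summable_expEntry (A : Matrix X X ℝ) (i j : X) :
    Summable (fun k : ℕ => (k ! : ℝ)⁻¹ * (A ^ k) i j) := by
  obtain ⟨a, ha0, ha⟩ := exists_entry_bound A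
  refine Summable.of_norm_bounded (g := fun k => (a * Fintype.card X) ^ k / k !)
    (Real.summable_pow_div_factorial _) fun k => ?_
  rw [Real.norm_eq_abs, abs_mul, abs_inv, abs_of_nonneg (by positivity : (0:ℝ) ≤ (k ! : ℝ))]
  rw [div_eq_inv_mul]
  exact mul_le_mul_of_nonneg_left (matPow_entry_bound A ha0 ha k i j) (by positivity)

lemma summable_expMat (A : Matrix X X ℝ) :
    Summable (fun k : ℕ => (k ! : ℝ)⁻¹ • A ^ k) := by
  refine Pi.summable.mpr fun i => ?_
  refine Pi.summable.mpr fun j => ?_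
  exact (summable_expEntry A i j).congr fun k => by simp [Matrix.smul_apply]

lemma expMat_entry (A : Matrix X X ℝ) (i j : X) :
    NormedSpace.exp A i j = ∑' k : ℕ, (k ! : ℝ)⁻¹ * (A ^ k) i j := by
  have h0 : NormedSpace.exp A = ∑' k : ℕ, (k ! : ℝ)⁻¹ • A ^ k := by
    rw [NormedSpace.exp_eq_tsum (𝕂 := ℝ)]
  rw [h0]
  have h1 := tsum_apply (x := i) (summable_expMat A)
  have h2 := tsum_apply (x := j) ((Pi.summable.mp (summable_expMat A)) i)
  exact (congrFun h1 j).trans (h2.trans (tsum_congr fun k => by simp [Matrix.smul_apply]))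

lemma matPow_nonneg (A : Matrix X X ℝ) (hA : ∀ i j, 0 ≤ A i j) :
    ∀ (k : ℕ) (i j : X), 0 ≤ (A ^ k) i j := by
  intro k
  induction k with
  | zero => intro i j; simp only [pow_zero, Matrix.one_apply]; split <;> norm_num
  | succ k ih =>
    intro i j
    rw [pow_succ, Matrix.mul_apply]
    exact Finset.sum_nonneg fun l _ => mul_nonneg (ih i l) (hA l j)

lemma expMat_entry_nonneg_of_nonneg (A : Matrix X X ℝ) (hA : ∀ i j, 0 ≤ A i j) (i j : X) :
    0 ≤ NormedSpace.exp A i j := by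
  rw [expMat_entry]
  exact tsum_nonneg fun k => mul_nonneg (by positivity) (matPow_nonneg A hA k i j)

lemma expMat_smul_one (r : ℝ) :
    NormedSpace.exp (r • (1 : Matrix X X ℝ)) = Real.exp r • (1 : Matrix X X ℝ) := by
  ext i j
  rw [expMat_entry, Matrix.smul_apply, smul_eq_mul]
  rcases eq_or_ne i j with rfl | hij
  · rw [Matrix.one_apply_eq, mul_one]
    have hexp : Real.exp r = ∑' k : ℕ, (k ! : ℝ)⁻¹ • r ^ k := by
      rw [Real.exp_eq_exp_ℝ, NormedSpace.exp_eq_tsum (𝕂 := ℝ)]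
    rw [hexp]
    exact tsum_congr fun k => by
      simp [smul_pow, Matrix.smul_apply, Matrix.one_apply_eq]
  · rw [Matrix.one_apply_ne hij, mul_zero]
    rw [tsum_congr (fun k => by
      simp [smul_pow, Matrix.smul_apply, Matrix.one_apply_ne hij] :
      ∀ k : ℕ, (k ! : ℝ)⁻¹ * ((r • (1 : Matrix X X ℝ)) ^ k) i j = 0), tsum_zero]

lemma expMat_entry_nonneg_of_offdiag (A : Matrix X X ℝ) (hA : ∀ i j, i ≠ j → 0 ≤ A i j)
    (i j : X) : 0 ≤ NormedSpace.exp A i j := by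
  obtain ⟨a, ha0, ha⟩ := exists_entry_bound A
  have hdecomp : A = (-a) • (1 : Matrix X X ℝ) + (A + a • (1 : Matrix X X ℝ)) := by
    ext i' j'; simp
  have hcomm : Commute ((-a) • (1 : Matrix X X ℝ)) (A + a • (1 : Matrix X X ℝ)) :=
    (Commute.one_left _).smul_left _
  have hB : ∀ i' j', 0 ≤ (A + a • (1 : Matrix X X ℝ)) i' j' := by
    intro i' j'
    rcases eq_or_ne i' j' with rfl | h
    · simp only [Matrix.add_apply, Matrix.smul_apply, Matrix.one_apply_eq, smul_eq_mul, mul_one]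
      have := abs_le.mp (ha i' i')
      linarith [this.1]
    · simp only [Matrix.add_apply, Matrix.smul_apply, Matrix.one_apply_ne h, smul_eq_mul,
        mul_zero, add_zero]
      exact hA i' j' h
  calc (0:ℝ) ≤ Real.exp (-a) * NormedSpace.exp (A + a • (1 : Matrix X X ℝ)) i j :=
        mul_nonneg (Real.exp_pos _).le (expMat_entry_nonneg_of_nonneg _ hB i j)
    _ = NormedSpace.exp A i j := by
        conv_rhs => rw [hdecomp]
        rw [Matrix.exp_add_of_commute _ _ hcomm, expMat_smul_one]
        rw [Matrix.smul_mul, one_mul, Matrix.smul_apply, smul_eq_mul]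

lemma matPow_rowsum_zero (A : Matrix X X ℝ) (h : ∀ i, ∑ j, A i j = 0) :
    ∀ (k : ℕ) (i : X), ∑ j, (A ^ (k + 1)) i j = 0 := by
  intro k
  induction k with
  | zero => intro i; simpa [pow_one] using h i
  | succ k ih =>
    intro i
    have : ∀ j, (A ^ (k + 2)) i j = ∑ l, (A ^ (k+1)) i l * A l j := by
      intro j; rw [pow_succ, Matrix.mul_apply]
    rw [Finset.sum_congr rfl fun j _ => this j, Finset.sum_comm]
    simp only [← Finset.mul_sum, h, mul_zero, Finset.sum_const_zero]

lemma expMat_rowsum_one (A : Matrix X X ℝ) (h : ∀ i, ∑ j, A i j = 0) (i : X) :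
    ∑ j, NormedSpace.exp A i j = 1 := by
  have hs : ∀ j : X, Summable fun k : ℕ => (k ! : ℝ)⁻¹ * (A ^ k) i j :=
    fun j => summable_expEntry A i j
  have h1 : HasSum (fun k : ℕ => ∑ j, (k ! : ℝ)⁻¹ * (A ^ k) i j)
      (∑ j, ∑' k : ℕ, (k ! : ℝ)⁻¹ * (A ^ k) i j) :=
    hasSum_sum fun j _ => (hs j).hasSum
  have hfun : (fun k : ℕ => ∑ j, (k ! : ℝ)⁻¹ * (A ^ k) i j)
      = fun k : ℕ => if k = 0 then (1:ℝ) else 0 := by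
    funext k
    rcases k with _ | k
    · simp [Matrix.one_apply, Finset.sum_ite_eq]
    · rw [if_neg (Nat.succ_ne_zero k)]
      rw [← Finset.mul_sum, matPow_rowsum_zero A h k i, mul_zero]
  rw [hfun] at h1
  have h2 : HasSum (fun k : ℕ => if k = 0 then (1:ℝ) else 0) 1 := by
    have := hasSum_ite_eq (0 : ℕ) (1 : ℝ)
    simpa [eq_comm] using this
  have h3 := h1.unique h2
  calc ∑ j, NormedSpace.exp A i j = ∑ j, ∑' k : ℕ, (k ! : ℝ)⁻¹ * (A ^ k) i j :=
        Finset.sum_congr rfl fun j _ => expMat_entry A i j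
    _ = 1 := h3

lemma expMat_entry_contOn (M : Matrix X X ℝ) (ρ : ℝ → ℝ) (K : Set ℝ)
    (hρ : ContinuousOn ρ K) {R : ℝ} (hR0 : 0 ≤ R) (hR : ∀ s ∈ K, |ρ s| ≤ R) (i j : X) :
    ContinuousOn (fun s => NormedSpace.exp (ρ s • M) i j) K := by
  obtain ⟨a, ha0, ha⟩ := exists_entry_bound M
  have hrw : ∀ s, NormedSpace.exp (ρ s • M) i j
      = ∑' k : ℕ, (k ! : ℝ)⁻¹ * (ρ s ^ k * (M ^ k) i j) := by
    intro s
    rw [expMat_entry]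
    exact tsum_congr fun k => by rw [smul_pow, Matrix.smul_apply, smul_eq_mul]
  simp only [hrw]
  refine continuousOn_tsum (f := fun (k : ℕ) (s : ℝ) => (k ! : ℝ)⁻¹ * (ρ s ^ k * (M ^ k) i j))
    (u := fun k => (R * (a * Fintype.card X)) ^ k / k !) ?_ ?_ ?_
  · intro k
    exact continuousOn_const.mul ((hρ.pow k).mul continuousOn_const)
  · exact Real.summable_pow_div_factorial _
  · intro k s hs
    rw [Real.norm_eq_abs, abs_mul, abs_mul, abs_inv,
      abs_of_nonneg (by positivity : (0:ℝ) ≤ (k ! : ℝ)), abs_pow]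
    rw [div_eq_inv_mul]
    refine mul_le_mul_of_nonneg_left ?_ (by positivity)
    calc |ρ s| ^ k * |(M ^ k) i j| ≤ R ^ k * (a * Fintype.card X) ^ k := by
          exact mul_le_mul (pow_le_pow_left₀ (abs_nonneg _) (hR s hs) k)
            (matPow_entry_bound M ha0 ha k i j) (abs_nonneg _) (by positivity)
      _ = (R * (a * Fintype.card X)) ^ k := (mul_pow _ _ _).symm

end SirAux

namespace SirAux

variable (d n : ℕ) [NeZero n]

lemma gridNonempty : Nonempty (Grid d n) := ⟨fun _ => 0⟩

lemma update_iff (x y : Grid d n) (i : Fin d) :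
    Function.update x i (x i + 1) = y ↔ Function.update y i (y i - 1) = x := by
  constructor
  · rintro rfl
    funext j
    rcases eq_or_ne j i with rfl | hj
    · simp
    · simp [Function.update_of_ne hj]
  · rintro rfl
    funext j
    rcases eq_or_ne j i with rfl | hj
    · simp
    · simp [Function.update_of_ne hj]

lemma lapMat_apply (x y : Grid d n) : lapMat d n x y = (n:ℝ)^2 * ∑ i : Fin d,
    ((if Function.update x i (x i + 1) = y then (1:ℝ) else 0)
      - 2 * (if x = y then (1:ℝ) else 0)
      + (if Function.update x i (x i - 1) = y then (1:ℝ) else 0)) := rfl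

lemma lapMat_symm (x y : Grid d n) : lapMat d n x y = lapMat d n y x := by
  rw [lapMat_apply, lapMat_apply]
  congr 1
  apply Finset.sum_congr rfl
  intro i _
  have h1 : (Function.update x i (x i + 1) = y) = (Function.update y i (y i - 1) = x) :=
    propext (update_iff d n x y i)
  have h2 : (Function.update x i (x i - 1) = y) = (Function.update y i (y i + 1) = x) :=
    propext ((update_iff d n y x i).symm)
  have h3 : (x = y) = (y = x) := propext eq_comm
  simp only [h1, h2, h3]
  ring

lemma lapMat_rowsum (x : Grid d n) : ∑ y, lapMat d n x y = 0 := by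
  have hne := gridNonempty d n
  simp only [lapMat_apply]
  rw [← Finset.mul_sum, Finset.sum_comm]
  have : ∀ i : Fin d, (∑ y : Grid d n,
      ((if Function.update x i (x i + 1) = y then (1:ℝ) else 0)
        - 2 * (if x = y then (1:ℝ) else 0)
        + (if Function.update x i (x i - 1) = y then (1:ℝ) else 0))) = 0 := by
    intro i
    rw [Finset.sum_add_distrib, Finset.sum_sub_distrib, ← Finset.mul_sum]
    rw [Finset.sum_ite_eq, Finset.sum_ite_eq, Finset.sum_ite_eq]
    simp only [Finset.mem_univ, if_true]
    norm_num
  rw [Finset.sum_congr rfl fun i _ => this i]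
  simp

lemma lapMat_offdiag_nonneg {x y : Grid d n} (hxy : x ≠ y) : 0 ≤ lapMat d n x y := by
  rw [lapMat_apply]
  apply mul_nonneg (by positivity)
  apply Finset.sum_nonneg
  intro i _
  rw [if_neg hxy]
  have h1 : (0:ℝ) ≤ if Function.update x i (x i + 1) = y then (1:ℝ) else 0 := by positivity
  have h2 : (0:ℝ) ≤ if Function.update x i (x i - 1) = y then (1:ℝ) else 0 := by positivity
  linarith

lemma heatKer_nonneg {ν s t : ℝ} (hν : 0 ≤ ν) (hst : s ≤ t) (y x : Grid d n) :
    0 ≤ heatKer d n ν s t y x := by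
  have := gridNonempty d n
  apply expMat_entry_nonneg_of_offdiag
  intro i j hij
  rw [Matrix.smul_apply, Matrix.smul_apply, smul_eq_mul, smul_eq_mul]
  exact mul_nonneg (by linarith) (mul_nonneg hν (lapMat_offdiag_nonneg d n hij))

lemma heatKer_smul_rowsum (c : ℝ) (x : Grid d n) :
    ∑ y, (c • lapMat d n) x y = 0 := by
  simp only [Matrix.smul_apply, smul_eq_mul, ← Finset.mul_sum, lapMat_rowsum, mul_zero]

lemma heatKer_sum (ν s t : ℝ) (x : Grid d n) :
    ∑ y, heatKer d n ν s t y x = 1 := by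
  have := gridNonempty d n
  have hM : (t - s) • ν • lapMat d n = ((t - s) * ν) • lapMat d n := smul_smul _ _ _
  have hsymm : ∀ y : Grid d n, heatKer d n ν s t y x
      = NormedSpace.exp (((t - s) * ν) • lapMat d n) x y := by
    intro y
    unfold heatKer
    rw [hM]
    have htr : Matrix.transpose (((t - s) * ν) • lapMat d n) = ((t - s) * ν) • lapMat d n := by
      ext a b
      rw [Matrix.transpose_apply, Matrix.smul_apply, Matrix.smul_apply, lapMat_symm]
    conv_lhs => rw [← htr]
    rw [Matrix.exp_transpose, Matrix.transpose_apply]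
  rw [Finset.sum_congr rfl fun y _ => hsymm y]
  exact expMat_rowsum_one _ (fun i => heatKer_smul_rowsum d n _ i) x

lemma heatKer_le_one {ν s t : ℝ} (hν : 0 ≤ ν) (hst : s ≤ t) (y x : Grid d n) :
    heatKer d n ν s t y x ≤ 1 := by
  have := gridNonempty d n
  rw [← heatKer_sum d n ν s t x]
  exact Finset.single_le_sum (f := fun y => heatKer d n ν s t y x)
    (fun z _ => heatKer_nonneg d n hν hst z x) (Finset.mem_univ y)

lemma heatKer_contOn (ν t : ℝ) {T : ℝ} (hT : 0 ≤ T) (htmem : t ∈ Icc 0 T) (y x : Grid d n) :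
    ContinuousOn (fun s => heatKer d n ν s t y x) (Icc (0:ℝ) T) := by
  have := gridNonempty d n
  have hrw : ∀ s : ℝ, heatKer d n ν s t y x
      = NormedSpace.exp ((t - s) • (ν • lapMat d n)) y x := fun s => rfl
  simp only [hrw]
  apply expMat_entry_contOn (ν • lapMat d n) (fun s => t - s) (Icc 0 T)
    (continuousOn_const.sub continuousOn_id) hT
  intro s hs
  rw [abs_le]
  constructor
  · linarith [htmem.1, hs.2]
  · linarith [htmem.2, hs.1]

end SirAux

namespace SirAux

lemma gronwall_int {f1 : ℝ → ℝ} {K a T : ℝ} (hf1 : Continuous f1) (hK : 0 ≤ K)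
    (h : ∀ t ∈ Icc (0:ℝ) T, f1 t ≤ a + K * ∫ s in (0:ℝ)..t, f1 s) :
    ∀ t ∈ Icc (0:ℝ) T, f1 t ≤ a * Real.exp (K * t) := by
  rcases eq_or_lt_of_le hK with hK0 | hK0
  · intro t ht
    have h1 := h t ht
    rw [← hK0] at h1
    rw [← hK0]
    simpa using h1
  · set ψ : ℝ → ℝ := fun t => ∫ s in (0:ℝ)..t, f1 s with hψdef
    have hψd : ∀ t : ℝ, HasDerivAt ψ (f1 t) t := by
      intro t
      exact intervalIntegral.integral_hasDerivAt_right (hf1.intervalIntegrable _ _)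
        (hf1.stronglyMeasurable.stronglyMeasurableAtFilter) hf1.continuousAt
    set w : ℝ → ℝ := fun t => Real.exp (-(K * t)) * (ψ t + a / K) with hwdef
    have hwd : ∀ t : ℝ, HasDerivAt w (Real.exp (-(K * t)) * (f1 t - (K * ψ t + a))) t := by
      intro t
      have h1 : HasDerivAt (fun t : ℝ => Real.exp (-(K * t))) (-K * Real.exp (-(K * t))) t := by
        have h2 : HasDerivAt (fun t : ℝ => -(K * t)) (-K) t := by
          simpa using ((hasDerivAt_id t).const_mul (-K))
        have h5 := (Real.hasDerivAt_exp (-(K * t))).comp t h2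
        rw [show -K * Real.exp (-(K * t)) = Real.exp (-(K * t)) * -K by ring]
        exact h5
      have h3 := h1.mul ((hψd t).add_const (a / K))
      refine h3.congr_deriv ?_
      have hKa : K * (a / K) = a := by field_simp
      linear_combination (-Real.exp (-(K * t))) * hKa
    have hmono : AntitoneOn w (Icc 0 T) := by
      apply antitoneOn_of_deriv_nonpos (convex_Icc _ _)
      · exact (continuous_iff_continuousAt.mpr fun t => (hwd t).continuousAt).continuousOn
      · intro t _
        exact (hwd t).differentiableAt.differentiableWithinAt
      · intro t ht
        rw [interior_Icc] at ht
        rw [(hwd t).deriv]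
        have h4 := h t ⟨ht.1.le, ht.2.le⟩
        have h5 : f1 t - (K * ψ t + a) ≤ 0 := by rw [hψdef]; dsimp only; linarith
        exact mul_nonpos_of_nonneg_of_nonpos (Real.exp_pos _).le h5
    intro t ht
    have h2 : w t ≤ w 0 := hmono (left_mem_Icc.mpr (ht.1.trans ht.2)) ht ht.1
    have hw0 : w 0 = a / K := by
      rw [hwdef]
      simp [hψdef, intervalIntegral.integral_same]
    have hE : (0:ℝ) < Real.exp (K * t) := Real.exp_pos _
    have hEinv : Real.exp (-(K * t)) = (Real.exp (K * t))⁻¹ := Real.exp_neg _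
    rw [hw0, hwdef] at h2
    dsimp only at h2
    rw [hEinv, inv_mul_le_iff₀ hE] at h2
    have h6 := h t ht
    have h7 : K * ψ t ≤ a * Real.exp (K * t) - a := by
      have h8 : K * (ψ t + a / K) ≤ K * (Real.exp (K * t) * (a / K)) :=
        mul_le_mul_of_nonneg_left h2 hK
      have h9 : K * (ψ t + a / K) = K * ψ t + a := by field_simp
      have h10 : K * (Real.exp (K * t) * (a / K)) = a * Real.exp (K * t) := by field_simp
      linarith [h9 ▸ h10 ▸ h8]
    have : (∫ s in (0:ℝ)..t, f1 s) = ψ t := rfl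
    rw [this] at h6
    linarith

lemma aux_pow {S C γ : ℝ} {B : ℝ} (hS : 0 ≤ S) (hSC : S ≤ C) (hB : 0 < B) (hSB : S ≤ B)
    (hγ0 : 0 ≤ γ) (hγ1 : γ ≤ 1) : S * B ^ (-γ) ≤ max 1 C := by
  rcases eq_or_lt_of_le hS with h0 | h0
  · rw [← h0, zero_mul]
    exact le_trans zero_le_one (le_max_left _ _)
  · have h1 : B ^ (-γ) ≤ S ^ (-γ) :=
      Real.rpow_le_rpow_of_nonpos h0 hSB (neg_nonpos.mpr hγ0)
    have h2 : S * B ^ (-γ) ≤ S * S ^ (-γ) := mul_le_mul_of_nonneg_left h1 hS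
    have h3 : S * S ^ (-γ) = S ^ (1 - γ) := by
      rw [show (1:ℝ) - γ = 1 + (-γ) by ring, Real.rpow_add h0, Real.rpow_one]
    rcases le_total S 1 with h4 | h4
    · have h5 := Real.rpow_le_one hS h4 (by linarith : (0:ℝ) ≤ 1 - γ)
      calc S * B ^ (-γ) ≤ S ^ (1 - γ) := h2.trans_eq h3
        _ ≤ 1 := h5
        _ ≤ max 1 C := le_max_left _ _
    · have h5 : S ^ (1 - γ) ≤ S ^ (1:ℝ) :=
        Real.rpow_le_rpow_of_exponent_le h4 (by linarith)
      rw [Real.rpow_one] at h5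
      exact (h2.trans_eq h3).trans (h5.trans (hSC.trans (le_max_right _ _)))

lemma bdd_of_contOn {X : Type*} [Fintype X] [Nonempty X] {T : ℝ} (hT : 0 ≤ T)
    (f : ℝ → X → ℝ) (hf : ∀ x, ContinuousOn (fun t => f t x) (Icc 0 T)) :
    ∃ M : ℝ, ∀ t ∈ Icc (0:ℝ) T, ∀ x, f t x ≤ M := by
  have hco : IsCompact (Icc (0:ℝ) T) := isCompact_Icc
  have hne : (Icc (0:ℝ) T).Nonempty := ⟨0, left_mem_Icc.mpr hT⟩
  have h : ∀ x : X, ∃ t₀ ∈ Icc (0:ℝ) T, ∀ t ∈ Icc (0:ℝ) T, f t x ≤ f t₀ x := by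
    intro x
    obtain ⟨t₀, ht₀, hmax⟩ := hco.exists_isMaxOn hne (hf x)
    exact ⟨t₀, ht₀, fun t ht => hmax ht⟩
  choose t₀ ht₀mem ht₀max using h
  have hFne : (Finset.univ : Finset X).Nonempty := Finset.univ_nonempty
  refine ⟨Finset.univ.sup' hFne (fun x => f (t₀ x) x), fun t ht x => ?_⟩
  exact le_trans (ht₀max x t ht) (Finset.le_sup' (fun x => f (t₀ x) x) (Finset.mem_univ x))

lemma pos_lb_of_contOn {X : Type*} [Fintype X] [Nonempty X] {T : ℝ} (hT : 0 ≤ T)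
    (f : ℝ → X → ℝ) (hf : ∀ x, ContinuousOn (fun t => f t x) (Icc 0 T))
    (hpos : ∀ t ∈ Icc (0:ℝ) T, ∀ x, 0 < f t x) :
    ∃ b : ℝ, 0 < b ∧ ∀ t ∈ Icc (0:ℝ) T, ∀ x, b ≤ f t x := by
  have hco : IsCompact (Icc (0:ℝ) T) := isCompact_Icc
  have hne : (Icc (0:ℝ) T).Nonempty := ⟨0, left_mem_Icc.mpr hT⟩
  have h : ∀ x : X, ∃ t₀ ∈ Icc (0:ℝ) T, ∀ t ∈ Icc (0:ℝ) T, f t₀ x ≤ f t x := by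
    intro x
    obtain ⟨t₀, ht₀, hmin⟩ := hco.exists_isMinOn hne (hf x)
    exact ⟨t₀, ht₀, fun t ht => hmin ht⟩
  choose t₀ ht₀mem ht₀min using h
  have hFne : (Finset.univ : Finset X).Nonempty := Finset.univ_nonempty
  refine ⟨Finset.univ.inf' hFne (fun x => f (t₀ x) x), ?_, fun t ht x => ?_⟩
  · rw [Finset.lt_inf'_iff]
    exact fun x _ => hpos (t₀ x) (ht₀mem x) x
  · exact le_trans (Finset.inf'_le (fun x => f (t₀ x) x) (Finset.mem_univ x)) (ht₀min x t ht)

end SirAux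

namespace SirAux

lemma discLap_le {d n : ℕ} [NeZero n] (f : Grid d n → ℝ) (M : ℝ) (hf : ∀ y, f y ≤ M)
    (x : Grid d n) : discLap d n f x ≤ 2 * d * (n:ℝ)^2 * (M - f x) := by
  unfold discLap
  have hbd : ∀ i : Fin d, f (Function.update x i (x i + 1)) - 2 * f x
      + f (Function.update x i (x i - 1)) ≤ 2 * (M - f x) := by
    intro i
    have h1 := hf (Function.update x i (x i + 1))
    have h2 := hf (Function.update x i (x i - 1))
    linarith
  calc (n:ℝ)^2 * ∑ i : Fin d, (f (Function.update x i (x i + 1)) - 2 * f x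
      + f (Function.update x i (x i - 1)))
      ≤ (n:ℝ)^2 * ∑ _i : Fin d, 2 * (M - f x) :=
        mul_le_mul_of_nonneg_left (Finset.sum_le_sum fun i _ => hbd i) (by positivity)
    _ = 2 * d * (n:ℝ)^2 * (M - f x) := by
        rw [Finset.sum_const, Finset.card_univ, Fintype.card_fin, nsmul_eq_mul]
        ring

lemma maxPrinciple (d n : ℕ) [NeZero n] {T ν G A : ℝ} (hν : 0 ≤ ν) (hT : 0 ≤ T)
    (u g : ℝ → Grid d n → ℝ)
    (hu : ∀ x, ContinuousOn (fun t => u t x) (Icc 0 T))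
    (hg : ∀ x, IntervalIntegrable (fun s => g s x) volume 0 T)
    (hL : ∀ x, IntervalIntegrable (fun s => discLap d n (u s) x) volume 0 T)
    (heq : ∀ t ∈ Icc (0:ℝ) T, ∀ x, u t x = u 0 x + (∫ s in (0:ℝ)..t, g s x)
        + ν * ∫ s in (0:ℝ)..t, discLap d n (u s) x)
    (hgG : ∀ s ∈ Icc (0:ℝ) T, ∀ x, g s x ≤ G)
    (hu0 : ∀ x, u 0 x ≤ A) :
    ∀ t ∈ Icc (0:ℝ) T, ∀ x, u t x ≤ A + G * t := by
  have hXne : Nonempty (Grid d n) := ⟨fun _ => 0⟩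
  have hne : (Finset.univ : Finset (Grid d n)).Nonempty := Finset.univ_nonempty
  suffices hδ : ∀ δ > (0:ℝ), ∀ t ∈ Icc (0:ℝ) T, ∀ x, u t x ≤ A + G * t + δ by
    intro t ht x
    exact le_of_forall_pos_le_add fun δ hδ' => hδ δ hδ' t ht x
  intro δ hδ
  set χ : ℝ → ℝ := fun r => (Finset.univ.sup' hne fun y => u r y) - G * r with hχdef
  have hχcont : ContinuousOn χ (Icc 0 T) :=
    (ContinuousOn.finset_sup'_apply hne fun y _ => hu y).sub
      (continuousOn_const.mul continuousOn_id)
  by_cases hBadne : (Icc (0:ℝ) T ∩ χ ⁻¹' Ici (A + δ)).Nonempty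
  swap
  · intro t ht x
    have hlt : χ t < A + δ := by
      by_contra hcon
      exact hBadne ⟨t, ht, le_of_not_gt hcon⟩
    have hx : u t x ≤ Finset.univ.sup' hne fun y => u t y :=
      Finset.le_sup' (fun y => u t y) (Finset.mem_univ x)
    rw [hχdef] at hlt
    dsimp only at hlt
    linarith
  · exfalso
    set Bad : Set ℝ := Icc (0:ℝ) T ∩ χ ⁻¹' Ici (A + δ) with hBaddef
    have hBadclosed : IsClosed Bad :=
      hχcont.preimage_isClosed_of_isClosed isClosed_Icc isClosed_Ici
    have hbdd : BddBelow Bad := ⟨0, fun r hr => hr.1.1⟩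
    set t₁ := sInf Bad with ht₁def
    have ht₁Bad : t₁ ∈ Bad := hBadclosed.csInf_mem hBadne hbdd
    have ht₁Icc : t₁ ∈ Icc (0:ℝ) T := ht₁Bad.1
    have hχt₁ : A + δ ≤ χ t₁ := ht₁Bad.2
    have hχ0 : χ 0 ≤ A := by
      rw [hχdef]
      dsimp only
      rw [mul_zero, sub_zero]
      exact Finset.sup'_le hne _ fun y _ => hu0 y
    have ht₁pos : 0 < t₁ := by
      rcases eq_or_lt_of_le ht₁Icc.1 with h | h
      · exfalso; rw [← h] at hχt₁; linarith
      · exact h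
    have hlt : ∀ r ∈ Ico (0:ℝ) t₁, χ r < A + δ := by
      intro r hr
      by_contra hge
      push_neg at hge
      have hrBad : r ∈ Bad := ⟨⟨hr.1, hr.2.le.trans ht₁Icc.2⟩, hge⟩
      exact absurd (csInf_le hbdd hrBad) (not_le.mpr hr.2)
    have hχle : ∀ r ∈ Icc (0:ℝ) t₁, χ r ≤ A + δ := by
      intro r hr
      rcases eq_or_lt_of_le hr.2 with h | h
      · rw [h]
        have hsub : Ico (0:ℝ) t₁ ⊆ Icc (0:ℝ) T :=
          fun z hz => ⟨hz.1, hz.2.le.trans ht₁Icc.2⟩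
        have h1 : ContinuousWithinAt χ (Ico (0:ℝ) t₁) t₁ :=
          (hχcont t₁ ht₁Icc).mono hsub
        have hnb : (nhdsWithin t₁ (Ico (0:ℝ) t₁)).NeBot := by
          rw [← mem_closure_iff_nhdsWithin_neBot, closure_Ico (ne_of_lt ht₁pos)]
          exact right_mem_Icc.mpr ht₁pos.le
        refine le_of_tendsto h1 ?_
        filter_upwards [self_mem_nhdsWithin] with z hz
        exact (hlt z hz).le
      · exact (hlt r ⟨hr.1, h⟩).le
    have hM : ∀ r ∈ Icc (0:ℝ) t₁, ∀ y, u r y ≤ A + δ + G * r := by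
      intro r hr y
      have h1 : u r y ≤ Finset.univ.sup' hne fun z => u r z :=
        Finset.le_sup' (fun z => u r z) (Finset.mem_univ y)
      have h2 := hχle r hr
      rw [hχdef] at h2
      dsimp only at h2
      linarith
    obtain ⟨x₁, -, hx₁⟩ := Finset.exists_mem_eq_sup' hne (fun y => u t₁ y)
    set KK : ℝ := ν * (2 * d * (n:ℝ)^2) with hKKdef
    have hKK : 0 ≤ KK := mul_nonneg hν (by positivity)
    set h : ℝ → ℝ := fun r => A + δ + G * r - u r x₁ with hhdef
    have hh0 : δ ≤ h 0 := by
      have := hu0 x₁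
      rw [hhdef]; dsimp only; linarith
    have hht₁ : h t₁ ≤ 0 := by
      have h2 : A + δ ≤ (Finset.univ.sup' hne fun y => u t₁ y) - G * t₁ := hχt₁
      rw [hx₁] at h2
      rw [hhdef]; dsimp only; linarith
    have hIccsub : Icc (0:ℝ) t₁ ⊆ Icc (0:ℝ) T := Icc_subset_Icc le_rfl ht₁Icc.2
    have hconth : ContinuousOn h (Icc (0:ℝ) t₁) := by
      rw [hhdef]
      exact (continuousOn_const.add (continuousOn_const.mul continuousOn_id)).sub
        ((hu x₁).mono hIccsub)
    have hkey : ∀ s ∈ Icc (0:ℝ) t₁, h s ≤ KK * ∫ r in s..t₁, h r := by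
      intro s hs
      have hsT : s ∈ Icc (0:ℝ) T := hIccsub hs
      have hsub : uIcc s t₁ ⊆ uIcc (0:ℝ) T := by
        apply uIcc_subset_uIcc <;> rw [uIcc_of_le hT]
        · exact hsT
        · exact ht₁Icc
      have hsub0 : uIcc (0:ℝ) s ⊆ uIcc (0:ℝ) T := by
        apply uIcc_subset_uIcc <;> rw [uIcc_of_le hT]
        · exact left_mem_Icc.mpr hT
        · exact hsT
      have hsub1 : uIcc (0:ℝ) t₁ ⊆ uIcc (0:ℝ) T := by
        apply uIcc_subset_uIcc <;> rw [uIcc_of_le hT]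
        · exact left_mem_Icc.mpr hT
        · exact ht₁Icc
      have hg1 : IntervalIntegrable (fun r => g r x₁) volume 0 t₁ := (hg x₁).mono_set hsub1
      have hg2 : IntervalIntegrable (fun r => g r x₁) volume 0 s := (hg x₁).mono_set hsub0
      have hgs : IntervalIntegrable (fun r => g r x₁) volume s t₁ := (hg x₁).mono_set hsub
      have hL1 : IntervalIntegrable (fun r => discLap d n (u r) x₁) volume 0 t₁ :=
        (hL x₁).mono_set hsub1
      have hL2 : IntervalIntegrable (fun r => discLap d n (u r) x₁) volume 0 s :=
        (hL x₁).mono_set hsub0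
      have hLs : IntervalIntegrable (fun r => discLap d n (u r) x₁) volume s t₁ :=
        (hL x₁).mono_set hsub
      have hdiff : u t₁ x₁ - u s x₁ = (∫ r in s..t₁, g r x₁)
          + ν * ∫ r in s..t₁, discLap d n (u r) x₁ := by
        have i1 := intervalIntegral.integral_interval_sub_left hg1 hg2
        have i2 := intervalIntegral.integral_interval_sub_left hL1 hL2
        rw [← i1, ← i2, heq t₁ ht₁Icc x₁, heq s hsT x₁]
        ring
      have hb1 : (∫ r in s..t₁, g r x₁) ≤ G * (t₁ - s) := by
        have hmono := intervalIntegral.integral_mono_on hs.2 hgs intervalIntegrable_const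
          (fun r hr => hgG r ⟨hs.1.trans hr.1, hr.2.trans ht₁Icc.2⟩ x₁)
        rwa [intervalIntegral.integral_const, smul_eq_mul, mul_comm] at hmono
      have hconths : ContinuousOn h (uIcc s t₁) := by
        rw [uIcc_of_le hs.2]
        exact hconth.mono (Icc_subset_Icc hs.1 le_rfl)
      have hhint : IntervalIntegrable h volume s t₁ := hconths.intervalIntegrable
      have hb2 : (∫ r in s..t₁, discLap d n (u r) x₁)
          ≤ ∫ r in s..t₁, 2 * d * (n:ℝ)^2 * h r := by
        apply intervalIntegral.integral_mono_on hs.2 hLs (hhint.const_mul _)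
        intro r hr
        have hrmem : r ∈ Icc (0:ℝ) t₁ := ⟨hs.1.trans hr.1, hr.2⟩
        calc discLap d n (u r) x₁ ≤ 2 * d * (n:ℝ)^2 * (A + δ + G * r - u r x₁) :=
              discLap_le (u r) (A + δ + G * r) (hM r hrmem) x₁
          _ = 2 * d * (n:ℝ)^2 * h r := by rw [hhdef]
      have hb2' : (∫ r in s..t₁, 2 * d * (n:ℝ)^2 * h r)
          = 2 * d * (n:ℝ)^2 * ∫ r in s..t₁, h r := intervalIntegral.integral_const_mul _ _
      have h5 : ν * (∫ r in s..t₁, discLap d n (u r) x₁) ≤ KK * ∫ r in s..t₁, h r := by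
        rw [hKKdef, mul_assoc]
        apply mul_le_mul_of_nonneg_left _ hν
        rw [← hb2']
        exact hb2
      have hht₁' : A + δ + G * t₁ - u t₁ x₁ ≤ 0 := hht₁
      have hgoal : A + δ + G * s - u s x₁ ≤ KK * ∫ r in s..t₁, h r := by linarith
      rw [hhdef]
      exact hgoal
    set clamp : ℝ → ℝ := fun σ => min (max σ 0) t₁ with hclampdef
    have hclampmem : ∀ σ : ℝ, clamp σ ∈ Icc (0:ℝ) t₁ :=
      fun σ => ⟨le_min (le_max_right _ _) ht₁pos.le, min_le_right _ _⟩
    have hclampcont : Continuous clamp := (continuous_id.max continuous_const).min continuous_const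
    set Hc : ℝ → ℝ := fun σ => h (clamp (t₁ - σ)) with hHcdef
    have hHccont : Continuous Hc :=
      hconth.comp_continuous (hclampcont.comp (continuous_const.sub continuous_id))
        (fun σ => hclampmem _)
    have hHcle : ∀ σ ∈ Icc (0:ℝ) t₁, Hc σ ≤ 0 + KK * ∫ τ in (0:ℝ)..σ, Hc τ := by
      intro σ hσ
      have hs' : t₁ - σ ∈ Icc (0:ℝ) t₁ := ⟨by linarith [hσ.2], by linarith [hσ.1]⟩
      have hceq : clamp (t₁ - σ) = t₁ - σ := by
        rw [hclampdef]; dsimp only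
        rw [max_eq_left hs'.1, min_eq_left hs'.2]
      have hHceq : Hc σ = h (t₁ - σ) := by rw [hHcdef]; dsimp only; rw [hceq]
      have hint : (∫ τ in (0:ℝ)..σ, Hc τ) = ∫ r in (t₁ - σ)..t₁, h r := by
        have hcongr : EqOn Hc (fun τ => h (t₁ - τ)) (uIcc (0:ℝ) σ) := by
          intro τ hτ
          rw [uIcc_of_le hσ.1] at hτ
          have hmem : t₁ - τ ∈ Icc (0:ℝ) t₁ :=
            ⟨by linarith [hτ.2, hσ.2], by linarith [hτ.1]⟩
          rw [hHcdef]; dsimp only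
          rw [hclampdef]; dsimp only
          rw [max_eq_left hmem.1, min_eq_left hmem.2]
        rw [intervalIntegral.integral_congr hcongr]
        rw [intervalIntegral.integral_comp_sub_left (fun r => h r) t₁]
        norm_num
      rw [hHceq, hint, zero_add]
      exact hkey (t₁ - σ) hs'
    have hfinal := gronwall_int hHccont hKK hHcle t₁ (right_mem_Icc.mpr ht₁pos.le)
    have hHct₁ : Hc t₁ = h 0 := by
      rw [hHcdef]; dsimp only
      rw [sub_self, hclampdef]; dsimp only
      rw [max_self, min_eq_left ht₁pos.le]
    rw [hHct₁, zero_mul] at hfinal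
    linarith

end SirAux

namespace SirAux

lemma cell_volume (d n : ℕ) [NeZero n] (x : Grid d n) :
    volume (cell d n x) = ENNReal.ofReal ((1 / (n:ℝ)) ^ d) := by
  have hn : (0:ℝ) < n := by
    exact_mod_cast Nat.pos_of_ne_zero (NeZero.ne n)
  rw [cell, volume_pi_pi]
  have hlen : ∀ i : Fin d, volume (Ico (((x i).val : ℝ) / n) ((((x i).val : ℝ) + 1) / n))
      = ENNReal.ofReal (1 / (n:ℝ)) := by
    intro i
    rw [Real.volume_Ico]
    congr 1
    field_simp
    ring
  rw [Finset.prod_congr rfl fun i _ => hlen i, Finset.prod_const, Finset.card_univ,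
    Fintype.card_fin, ← ENNReal.ofReal_pow (by positivity)]

lemma cellAvg_le {d n : ℕ} [NeZero n] {f : (Fin d → ℝ) → ℝ} {M : ℝ} (hf : Continuous f)
    (hM : ∀ y, f y ≤ M) (x : Grid d n) : cellAvg d n f x ≤ M := by
  have hn : (0:ℝ) < n := by
    exact_mod_cast Nat.pos_of_ne_zero (NeZero.ne n)
  have hmeas : MeasurableSet (cell d n x) :=
    MeasurableSet.univ_pi fun i => measurableSet_Ico
  have hvol := cell_volume d n x
  have hvollt : volume (cell d n x) < ⊤ := by rw [hvol]; exact ENNReal.ofReal_lt_top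
  have hint : IntegrableOn f (cell d n x) := by
    have hsub : cell d n x ⊆ Set.univ.pi fun i =>
        Icc (((x i).val : ℝ) / n) ((((x i).val : ℝ) + 1) / n) :=
      Set.pi_mono fun i _ => Ico_subset_Icc_self
    have hcomp : IsCompact (Set.univ.pi fun i : Fin d =>
        Icc (((x i).val : ℝ) / n) ((((x i).val : ℝ) + 1) / n)) :=
      isCompact_univ_pi fun i => isCompact_Icc
    exact (hf.continuousOn.integrableOn_compact hcomp).mono_set hsub
  have hci : IntegrableOn (fun _ => M) (cell d n x) :=
    integrableOn_const hvollt.ne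
  have h1 : (∫ y in cell d n x, f y) ≤ ∫ _y in cell d n x, M :=
    setIntegral_mono_on hint hci hmeas fun y _ => hM y
  have h2 : (∫ _y in cell d n x, M) = (1 / (n:ℝ)) ^ d * M := by
    rw [setIntegral_const, measureReal_def, hvol, ENNReal.toReal_ofReal (by positivity), smul_eq_mul]
  have h3 : (n:ℝ) ^ d * (1 / (n:ℝ)) ^ d = 1 := by
    rw [← mul_pow]
    field_simp
    simp
  calc cellAvg d n f x = (n:ℝ) ^ d * ∫ y in cell d n x, f y := rfl
    _ ≤ (n:ℝ) ^ d * ((1 / (n:ℝ)) ^ d * M) := by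
        apply mul_le_mul_of_nonneg_left _ (by positivity)
        rw [← h2]; exact h1
    _ = M := by rw [← mul_assoc, h3, one_mul]

end SirAux

/-- Lemma `bornSI`: uniform `L^∞` bounds for the deterministic
`ε`-system, with a constant depending only on `T, d, ν_S, ν_I, γ, λ*, β*, c₀, C₀`. -/
theorem sup_bounds_deterministic_system
    (d : ℕ) (hd : 1 ≤ d) (νS νI γ lamStar βStar c₀ C₀ T : ℝ)
    (hνS : 0 < νS) (hνI : 0 < νI) (hγ : γ ∈ Icc (0:ℝ) 1)
    (hls : 0 < lamStar) (hbs : 0 < βStar)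
    (hc₀ : 0 < c₀) (hcC : c₀ ≤ C₀) (hT : 0 < T) :
    ∃ C : ℝ, 0 < C ∧
      ∀ (n : ℕ) [NeZero n],
      ∀ lam lam0 : ℝ → ℝ, Measurable lam → Measurable lam0 →
        (∀ t, lam t ∈ Icc 0 lamStar) → (∀ t, lam0 t ∈ Icc 0 lamStar) →
      ∀ βe : ℝ → Grid d n → Grid d n → ℝ,
        (∀ x y, Measurable fun t => βe t x y) →
        (∀ t x y, 0 ≤ βe t x y) →
        (∀ t x, ∑ y, βe t x y ≤ βStar) →
      ∀ S₀ I₀ : (Fin d → ℝ) → ℝ, Continuous S₀ → Continuous I₀ →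
        (∀ y i, S₀ (Function.update y i (y i + 1)) = S₀ y) →
        (∀ y i, I₀ (Function.update y i (y i + 1)) = I₀ y) →
        (∀ y, S₀ y ∈ Icc c₀ C₀) → (∀ y, I₀ y ∈ Icc 0 C₀) →
      ∀ S F I : ℝ → Grid d n → ℝ,
        (∀ x, S 0 x = cellAvg d n S₀ x) → (∀ x, I 0 x = cellAvg d n I₀ x) →
        IsSolution d n νS νI γ lam lam0 βe T S F I →
        (∀ t ∈ Icc (0:ℝ) T, ∀ x, 0 ≤ S t x ∧ 0 ≤ I t x ∧ 0 ≤ F t x ∧ 0 < S t x + I t x) →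
      ∀ t ∈ Icc (0:ℝ) T, ∀ x, S t x ≤ C ∧ I t x ≤ C := by
  classical
  obtain ⟨hγ0, hγ1⟩ := hγ
  have hC₀ : 0 < C₀ := lt_of_lt_of_le hc₀ hcC
  set K₁ : ℝ := βStar * max 1 C₀ with hK₁def
  have hK₁ : 0 < K₁ := mul_pos hbs (lt_of_lt_of_le one_pos (le_max_left _ _))
  set Cf : ℝ := lamStar * C₀ * Real.exp (lamStar * K₁ * T) with hCfdef
  have hCf : 0 < Cf := by positivity
  set Gc : ℝ := K₁ * Cf with hGcdef
  have hGc : 0 < Gc := mul_pos hK₁ hCf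
  refine ⟨C₀ + Gc * T + 1, by positivity, ?_⟩
  intro n hnz lam lam0 hlamM hlam0M hlam hlam0 βe hβM hβ0 hβsum S₀ I₀ hS₀c hI₀c _ _ hS₀b hI₀b
    S F I hS0 hI0 hSol hpos t ht x
  obtain ⟨hSc, hFc, hIc, hSeq, hFeq, hIeq⟩ := hSol
  have hXne : Nonempty (Grid d n) := ⟨fun _ => 0⟩
  have hne : (Finset.univ : Finset (Grid d n)).Nonempty := Finset.univ_nonempty
  have h0T : (0:ℝ) ∈ Icc (0:ℝ) T := left_mem_Icc.mpr hT.le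
  have hS0le : ∀ y, S 0 y ≤ C₀ := fun y => by
    rw [hS0 y]; exact SirAux.cellAvg_le hS₀c (fun z => (hS₀b z).2) y
  have hI0le : ∀ y, I 0 y ≤ C₀ := fun y => by
    rw [hI0 y]; exact SirAux.cellAvg_le hI₀c (fun z => (hI₀b z).2) y
  set SG : ℝ → Grid d n → ℝ := fun s y => S s y * gam d n γ βe S I F s y with hSGdef
  have hSGapp : ∀ s y, SG s y = S s y * gam d n γ βe S I F s y := fun s y => rfl
  have hgamapp : ∀ s y, gam d n γ βe S I F s y
      = (S s y + I s y) ^ (-γ) * ∑ z, βe s y z * F s z := fun s y => rfl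
  have hSGnn : ∀ s ∈ Icc (0:ℝ) T, ∀ y, 0 ≤ SG s y := by
    intro s hs y
    rw [hSGapp, hgamapp]
    apply mul_nonneg (hpos s hs y).1
    apply mul_nonneg (Real.rpow_nonneg (by linarith [(hpos s hs y).2.2.2]) _)
    exact Finset.sum_nonneg fun z _ => mul_nonneg (hβ0 s y z) (hpos s hs z).2.2.1
  obtain ⟨MS, hMS⟩ := SirAux.bdd_of_contOn hT.le S hSc
  obtain ⟨MF, hMF⟩ := SirAux.bdd_of_contOn hT.le F hFc
  obtain ⟨bB, hbB0, hbB⟩ := SirAux.pos_lb_of_contOn hT.le (fun s y => S s y + I s y)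
    (fun y => (hSc y).add (hIc y)) (fun s hs y => (hpos s hs y).2.2.2)
  have hMS0 : 0 ≤ MS := le_trans (hpos 0 h0T x).1 (hMS 0 h0T x)
  have hMF0 : 0 ≤ MF := le_trans (hpos 0 h0T x).2.2.1 (hMF 0 h0T x)
  set Mb : ℝ := MS * (bB ^ (-γ) * (βStar * MF)) with hMbdef
  have hSGbd : ∀ s ∈ Icc (0:ℝ) T, ∀ y, SG s y ≤ Mb := by
    intro s hs y
    have h1 : (S s y + I s y) ^ (-γ) ≤ bB ^ (-γ) :=
      Real.rpow_le_rpow_of_nonpos hbB0 (hbB s hs y) (neg_nonpos.mpr hγ0)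
    have h2 : (∑ z, βe s y z * F s z) ≤ βStar * MF := by
      calc (∑ z, βe s y z * F s z) ≤ ∑ z, βe s y z * MF :=
            Finset.sum_le_sum fun z _ => mul_le_mul_of_nonneg_left (hMF s hs z) (hβ0 s y z)
        _ = (∑ z, βe s y z) * MF := by rw [← Finset.sum_mul]
        _ ≤ βStar * MF := mul_le_mul_of_nonneg_right (hβsum s y) hMF0
    have h2nn : 0 ≤ ∑ z, βe s y z * F s z :=
      Finset.sum_nonneg fun z _ => mul_nonneg (hβ0 s y z) (hpos s hs z).2.2.1
    have h1nn : 0 ≤ (S s y + I s y) ^ (-γ) :=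
      Real.rpow_nonneg (by linarith [(hpos s hs y).2.2.2]) _
    rw [hSGapp, hgamapp, hMbdef]
    apply mul_le_mul (hMS s hs y) _ (mul_nonneg h1nn h2nn) hMS0
    exact mul_le_mul h1 h2 h2nn (Real.rpow_nonneg hbB0.le _)
  have hSGmeas : ∀ y, AEStronglyMeasurable (fun s => SG s y)
      (volume.restrict (Icc (0:ℝ) T)) := by
    intro y
    have h1 : ContinuousOn (fun s => (S s y + I s y) ^ (-γ)) (Icc (0:ℝ) T) :=
      ContinuousOn.rpow_const ((hSc y).add (hIc y))
        (fun s hs => Or.inl (ne_of_gt (hpos s hs y).2.2.2))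
    have h2 : AEStronglyMeasurable (fun s => ∑ z, βe s y z * F s z)
        (volume.restrict (Icc (0:ℝ) T)) := by
      apply Finset.aestronglyMeasurable_fun_sum
      intro z _
      exact ((hβM y z).aestronglyMeasurable).mul
        ((hFc z).aestronglyMeasurable measurableSet_Icc)
    simp only [hSGapp, hgamapp]
    exact ((hSc y).aestronglyMeasurable measurableSet_Icc).mul
      ((h1.aestronglyMeasurable measurableSet_Icc).mul h2)
  have hSGint : ∀ y, IntervalIntegrable (fun s => SG s y) volume 0 T := by
    intro y
    rw [intervalIntegrable_iff_integrableOn_Icc_of_le hT.le]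
    apply Integrable.mono' (integrableOn_const measure_Icc_lt_top.ne :
      IntegrableOn (fun _ => Mb) (Icc (0:ℝ) T) volume) (hSGmeas y)
    refine (ae_restrict_iff' measurableSet_Icc).mpr (Filter.Eventually.of_forall fun s hs => ?_)
    rw [Real.norm_eq_abs, abs_of_nonneg (hSGnn s hs y)]
    exact hSGbd s hs y
  have hLapS : ∀ y, IntervalIntegrable (fun s => discLap d n (S s) y) volume 0 T := by
    intro y
    apply ContinuousOn.intervalIntegrable
    rw [uIcc_of_le hT.le]
    unfold discLap
    apply continuousOn_const.mul
    apply continuousOn_finset_sum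
    intro i _
    exact ((hSc _).sub (continuousOn_const.mul (hSc y))).add (hSc _)
  have hLapI : ∀ y, IntervalIntegrable (fun s => discLap d n (I s) y) volume 0 T := by
    intro y
    apply ContinuousOn.intervalIntegrable
    rw [uIcc_of_le hT.le]
    unfold discLap
    apply continuousOn_const.mul
    apply continuousOn_finset_sum
    intro i _
    exact ((hIc _).sub (continuousOn_const.mul (hIc y))).add (hIc _)
  have hSbound : ∀ t' ∈ Icc (0:ℝ) T, ∀ y, S t' y ≤ C₀ := by
    have hmp := SirAux.maxPrinciple d n (G := 0) (A := C₀) hνS.le hT.le S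
      (fun s y => -(SG s y)) hSc (fun y => (hSGint y).neg) hLapS
      (by
        intro t' ht' y
        rw [intervalIntegral.integral_neg]
        simp only [hSGapp]
        rw [hSeq t' ht' y]
        ring)
      (fun s hs y => neg_nonpos.mpr (hSGnn s hs y)) hS0le
    intro t' ht' y
    have := hmp t' ht' y
    linarith
  have hq_nn : ∀ s t' : ℝ, s ≤ t' → ∀ y z, 0 ≤ heatKer d n νI s t' y z :=
    fun s t' hst y z => SirAux.heatKer_nonneg d n hνI.le hst y z
  have hq_sum : ∀ s t' : ℝ, ∀ z, ∑ y, heatKer d n νI s t' y z = 1 :=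
    fun s t' z => SirAux.heatKer_sum d n νI s t' z
  have hq_le1 : ∀ s t' : ℝ, s ≤ t' → ∀ y z, heatKer d n νI s t' y z ≤ 1 :=
    fun s t' hst y z => SirAux.heatKer_le_one d n hνI.le hst y z
  set Fsup : ℝ → ℝ := fun s => Finset.univ.sup' hne fun y => F s y with hFsupdef
  have hFsupcont : ContinuousOn Fsup (Icc 0 T) :=
    ContinuousOn.finset_sup'_apply hne fun y _ => hFc y
  have hFle : ∀ s, ∀ y, F s y ≤ Fsup s := fun s y =>
    Finset.le_sup' (fun y => F s y) (Finset.mem_univ y)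
  have hFsupnn : ∀ s ∈ Icc (0:ℝ) T, 0 ≤ Fsup s := fun s hs =>
    le_trans (hpos s hs x).2.2.1 (hFle s x)
  have hSGφbd : ∀ s ∈ Icc (0:ℝ) T, ∀ y, SG s y ≤ K₁ * Fsup s := by
    intro s hs y
    have h1 : S s y * (S s y + I s y) ^ (-γ) ≤ max 1 C₀ :=
      SirAux.aux_pow (hpos s hs y).1 (hSbound s hs y) (hpos s hs y).2.2.2
        (by linarith [(hpos s hs y).2.1]) hγ0 hγ1
    have h2 : (∑ z, βe s y z * F s z) ≤ βStar * Fsup s := by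
      calc (∑ z, βe s y z * F s z) ≤ ∑ z, βe s y z * Fsup s :=
            Finset.sum_le_sum fun z _ => mul_le_mul_of_nonneg_left (hFle s z) (hβ0 s y z)
        _ = (∑ z, βe s y z) * Fsup s := by rw [← Finset.sum_mul]
        _ ≤ βStar * Fsup s := mul_le_mul_of_nonneg_right (hβsum s y) (hFsupnn s hs)
    have h2nn : 0 ≤ ∑ z, βe s y z * F s z := Finset.sum_nonneg fun z _ =>
      mul_nonneg (hβ0 s y z) (hpos s hs z).2.2.1
    have hmax : (0:ℝ) ≤ max 1 C₀ := le_trans zero_le_one (le_max_left _ _)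
    calc SG s y = (S s y * (S s y + I s y) ^ (-γ)) * ∑ z, βe s y z * F s z := by
          rw [hSGapp, hgamapp]; ring
      _ ≤ max 1 C₀ * (βStar * Fsup s) := mul_le_mul h1 h2 h2nn hmax
      _ = K₁ * Fsup s := by rw [hK₁def]; ring
  have hFb : ∀ t' ∈ Icc (0:ℝ) T, ∀ z, F t' z ≤ lamStar * C₀
      + (lamStar * K₁) * ∫ s in (0:ℝ)..t', Fsup s := by
    intro t' ht' z
    rw [hFeq t' ht' z]
    have hterm1 : lam0 t' * (∑ y, I 0 y * heatKer d n νI 0 t' y z) ≤ lamStar * C₀ := by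
      have hsnn : 0 ≤ ∑ y, I 0 y * heatKer d n νI 0 t' y z :=
        Finset.sum_nonneg fun y _ => mul_nonneg (hpos 0 h0T y).2.1 (hq_nn 0 t' ht'.1 y z)
      have hsle : (∑ y, I 0 y * heatKer d n νI 0 t' y z) ≤ C₀ := by
        calc (∑ y, I 0 y * heatKer d n νI 0 t' y z)
            ≤ ∑ y, C₀ * heatKer d n νI 0 t' y z := Finset.sum_le_sum fun y _ =>
              mul_le_mul_of_nonneg_right (hI0le y) (hq_nn 0 t' ht'.1 y z)
          _ = C₀ * ∑ y, heatKer d n νI 0 t' y z := by rw [← Finset.mul_sum]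
          _ = C₀ := by rw [hq_sum 0 t' z, mul_one]
      exact mul_le_mul (hlam0 t').2 hsle hsnn hls.le
    have hsub' : Icc (0:ℝ) t' ⊆ Icc (0:ℝ) T := Icc_subset_Icc le_rfl ht'.2
    have hIntR : ∀ y : Grid d n, IntervalIntegrable
        (fun s => (lamStar * K₁) * Fsup s * heatKer d n νI s t' y z) volume 0 t' := by
      intro y
      apply ContinuousOn.intervalIntegrable
      rw [uIcc_of_le ht'.1]
      exact (continuousOn_const.mul (hFsupcont.mono hsub')).mul
        ((SirAux.heatKer_contOn d n νI t' hT.le ht' y z).mono hsub')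
    have hIntL : ∀ y : Grid d n, IntervalIntegrable
        (fun s => lam (t' - s) * SG s y * heatKer d n νI s t' y z) volume 0 t' := by
      intro y
      rw [intervalIntegrable_iff_integrableOn_Icc_of_le ht'.1]
      have hmeas1 : AEStronglyMeasurable (fun s => lam (t' - s) * SG s y *
          heatKer d n νI s t' y z) (volume.restrict (Icc (0:ℝ) t')) := by
        have hm1 : AEStronglyMeasurable (fun s => lam (t' - s))
            (volume.restrict (Icc (0:ℝ) t')) :=
          (hlamM.comp (measurable_const.sub measurable_id)).aestronglyMeasurable
        have hm2 : AEStronglyMeasurable (fun s => SG s y)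
            (volume.restrict (Icc (0:ℝ) t')) :=
          (hSGmeas y).mono_measure (Measure.restrict_mono hsub' le_rfl)
        have hm3 : AEStronglyMeasurable (fun s => heatKer d n νI s t' y z)
            (volume.restrict (Icc (0:ℝ) t')) :=
          ((SirAux.heatKer_contOn d n νI t' hT.le ht' y z).mono hsub').aestronglyMeasurable
            measurableSet_Icc
        exact (hm1.mul hm2).mul hm3
      apply Integrable.mono' (integrableOn_const measure_Icc_lt_top.ne :
        IntegrableOn (fun _ => lamStar * Mb * 1) (Icc (0:ℝ) t') volume) hmeas1
      refine (ae_restrict_iff' measurableSet_Icc).mpr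
        (Filter.Eventually.of_forall fun s hs => ?_)
      have hsT : s ∈ Icc (0:ℝ) T := hsub' hs
      rw [Real.norm_eq_abs, abs_of_nonneg (mul_nonneg (mul_nonneg (hlam (t'-s)).1
        (hSGnn s hsT y)) (hq_nn s t' hs.2 y z))]
      apply mul_le_mul _ (hq_le1 s t' hs.2 y z) (hq_nn s t' hs.2 y z) (by positivity)
      exact mul_le_mul (hlam (t'-s)).2 (hSGbd s hsT y) (hSGnn s hsT y) hls.le
    have hterm2 : (∑ y, ∫ s in (0:ℝ)..t', lam (t' - s) * SG s y * heatKer d n νI s t' y z)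
        ≤ (lamStar * K₁) * ∫ s in (0:ℝ)..t', Fsup s := by
      have hstep : ∀ y : Grid d n, (∫ s in (0:ℝ)..t', lam (t' - s) * SG s y *
          heatKer d n νI s t' y z) ≤ ∫ s in (0:ℝ)..t', (lamStar * K₁) * Fsup s *
          heatKer d n νI s t' y z := by
        intro y
        apply intervalIntegral.integral_mono_on ht'.1 (hIntL y) (hIntR y)
        intro s hs
        have hsT : s ∈ Icc (0:ℝ) T := hsub' hs
        have hnn1 : 0 ≤ (lamStar * K₁) * Fsup s :=
          mul_nonneg (mul_nonneg hls.le hK₁.le) (hFsupnn s hsT)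
        apply mul_le_mul _ le_rfl (hq_nn s t' hs.2 y z) hnn1
        calc lam (t' - s) * SG s y ≤ lamStar * (K₁ * Fsup s) :=
              mul_le_mul (hlam (t'-s)).2 (hSGφbd s hsT y) (hSGnn s hsT y) hls.le
          _ = (lamStar * K₁) * Fsup s := by ring
      calc (∑ y, ∫ s in (0:ℝ)..t', lam (t' - s) * SG s y * heatKer d n νI s t' y z)
          ≤ ∑ y, ∫ s in (0:ℝ)..t', (lamStar * K₁) * Fsup s * heatKer d n νI s t' y z :=
            Finset.sum_le_sum fun y _ => hstep y
        _ = ∫ s in (0:ℝ)..t', ∑ y, (lamStar * K₁) * Fsup s * heatKer d n νI s t' y z :=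
            (intervalIntegral.integral_finset_sum fun y _ => hIntR y).symm
        _ = ∫ s in (0:ℝ)..t', (lamStar * K₁) * Fsup s := by
            apply intervalIntegral.integral_congr
            intro s _
            dsimp only
            rw [← Finset.mul_sum, hq_sum s t' z, mul_one]
        _ = (lamStar * K₁) * ∫ s in (0:ℝ)..t', Fsup s :=
            intervalIntegral.integral_const_mul _ _
    simp only [hSGapp] at hterm2
    exact add_le_add hterm1 hterm2
  have hFsupineq : ∀ t' ∈ Icc (0:ℝ) T, Fsup t' ≤ lamStar * C₀
      + (lamStar * K₁) * ∫ s in (0:ℝ)..t', Fsup s := by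
    intro t' ht'
    apply Finset.sup'_le
    intro y _
    exact hFb t' ht' y
  set Fsc : ℝ → ℝ := fun s => Fsup (min (max s 0) T) with hFscdef
  have hFsceq : ∀ s ∈ Icc (0:ℝ) T, Fsc s = Fsup s := by
    intro s hs
    rw [hFscdef]
    dsimp only
    rw [max_eq_left hs.1, min_eq_left hs.2]
  have hFsccont : Continuous Fsc := hFsupcont.comp_continuous
    ((continuous_id.max continuous_const).min continuous_const)
    (fun s => ⟨le_min (le_max_right _ _) hT.le, min_le_right _ _⟩)
  have hFscineq : ∀ t' ∈ Icc (0:ℝ) T, Fsc t' ≤ lamStar * C₀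
      + (lamStar * K₁) * ∫ s in (0:ℝ)..t', Fsc s := by
    intro t' ht'
    rw [hFsceq t' ht']
    have hcongr : (∫ s in (0:ℝ)..t', Fsc s) = ∫ s in (0:ℝ)..t', Fsup s := by
      apply intervalIntegral.integral_congr
      intro s hs
      rw [uIcc_of_le ht'.1] at hs
      exact hFsceq s ⟨hs.1, hs.2.trans ht'.2⟩
    rw [hcongr]
    exact hFsupineq t' ht'
  have hgron := SirAux.gronwall_int hFsccont
    (by positivity : (0:ℝ) ≤ lamStar * K₁) hFscineq
  have hFsupB : ∀ s ∈ Icc (0:ℝ) T, Fsup s ≤ Cf := by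
    intro s hs
    have h1 := hgron s hs
    rw [hFsceq s hs] at h1
    calc Fsup s ≤ lamStar * C₀ * Real.exp (lamStar * K₁ * s) := h1
      _ ≤ lamStar * C₀ * Real.exp (lamStar * K₁ * T) := by
          apply mul_le_mul_of_nonneg_left _ (by positivity)
          exact Real.exp_le_exp.mpr (mul_le_mul_of_nonneg_left hs.2 (by positivity))
      _ = Cf := by rw [hCfdef]
  have hSG_G : ∀ s ∈ Icc (0:ℝ) T, ∀ y, SG s y ≤ Gc := by
    intro s hs y
    calc SG s y ≤ K₁ * Fsup s := hSGφbd s hs y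
      _ ≤ K₁ * Cf := mul_le_mul_of_nonneg_left (hFsupB s hs) hK₁.le
      _ = Gc := by rw [hGcdef]
  have hIb := SirAux.maxPrinciple d n (G := Gc) (A := C₀) hνI.le hT.le I SG hIc hSGint hLapI
    (by
      intro t' ht' y
      simp only [hSGapp]
      exact hIeq t' ht' y)
    hSG_G hI0le
  constructor
  · have h1 := hSbound t ht x
    have h2 : 0 ≤ Gc * T := by positivity
    linarith
  · have h1 := hIb t ht x
    have h2 : Gc * t ≤ Gc * T := mul_le_mul_of_nonneg_left ht.2 hGc.le
    linarith
end

section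
/- Let Ī₀ : T^d → ℝ be continuous with 0 ≤ Ī₀ ≤ C₀ and ∫_{T^d} Ī₀(x)dx > 0, let λ* > 0 and let λ̄₀ : [0,∞) → [0,λ*] be measurable. For ε = 1/n set Ī^ε(0,x) := ε^{−d} ∫_{V_ε(x)} Ī₀(y)dy and Ī^ε(0) := Σ_{x ∈ D_ε} Ī^ε(0,x). Let (N_k, ε_k = 1/n_k) be a sequence with N_k → ∞, ε_k → 0 and N_k ε_k^d → ∞, and for each k let m_k ∈ ℕ satisfy |m_k − N_k Ī^{ε_k}(0)| ≤ 1. Suppose that on some probability space, for each t ∈ [0,T] there are random variables λ_{-1}(t), …, λ_{-m_k}(t), i.i.d. with values in [0,λ*] and mean E[λ_{-j}(t)] = λ̄₀(t), and D_{ε_k}-valued random variables Y_1(t), …, Y_{m_k}(t), i.i.d. with P(Y_j(t) = x) = Σ_y (Ī^{ε_k}(0,y)/Ī^{ε_k}(0)) q_{ε_k}^{y,x}(0,t), the family of λ's being independent of the family of Y's. Define F₀^{N_k,ε_k}(t,x) := N_k^{−1} Σ_{j=1}^{m_k} λ_{-j}(t) 1_{Y_j(t) = x} and F̄₀^{ε_k}(t,x)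 := λ̄₀(t) Σ_y Ī^{ε_k}(0,y) q_{ε_k}^{y,x}(0,t). Then for every T > 0, sup_{0 ≤ t ≤ T} E[ sup_{x ∈ D_{ε_k}} |F₀^{N_k,ε_k}(t,x) − F̄₀^{ε_k}(t,x)|² ] → 0 as k → ∞. -/
open MeasureTheory ProbabilityTheory Set Filter

lemma integrable_of_bdd {Ω : Type*} [MeasurableSpace Ω] {P : Measure Ω} [IsFiniteMeasure P]
    {f : Ω → ℝ} (hf : Measurable f) {C : ℝ} (h : ∀ ω, |f ω| ≤ C) : Integrable f P :=
  (integrable_const C).mono' hf.aestronglyMeasurable (Eventually.of_forall h)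

lemma cell_meas (d n : ℕ) (x : Grid d n) : MeasurableSet (cell d n x) :=
  MeasurableSet.univ_pi fun _ => measurableSet_Ico

lemma cell_vol_lt_top (d n : ℕ) (x : Grid d n) : volume (cell d n x) < ⊤ := by
  rw [cell, Real.volume_pi_Ico]
  exact ENNReal.prod_lt_top (fun _ _ => ENNReal.ofReal_lt_top)

lemma cell_integrableOn (d n : ℕ) (x : Grid d n) {f : (Fin d → ℝ) → ℝ} {C : ℝ}
    (hf : Measurable f) (hb : ∀ y, |f y| ≤ C) : IntegrableOn f (cell d n x) := by
  refine Integrable.mono' (g := fun _ => C) ?_ hf.aestronglyMeasurable.restrict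
    (Eventually.of_forall hb)
  exact integrableOn_const (cell_vol_lt_top d n x).ne

lemma cube_vol_lt_top (d : ℕ) : volume (Set.univ.pi fun _ : Fin d => Ico (0:ℝ) 1) < ⊤ := by
  rw [Real.volume_pi_Ico]
  exact ENNReal.prod_lt_top (fun _ _ => ENNReal.ofReal_lt_top)

lemma cube_integrableOn (d : ℕ) {f : (Fin d → ℝ) → ℝ} {C : ℝ}
    (hf : Measurable f) (hb : ∀ y, |f y| ≤ C) :
    IntegrableOn f (Set.univ.pi fun _ : Fin d => Ico (0:ℝ) 1) := by
  refine Integrable.mono' (g := fun _ => C) ?_ hf.aestronglyMeasurable.restrict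
    (Eventually.of_forall hb)
  exact integrableOn_const (cube_vol_lt_top d).ne

lemma cell_disjoint (d n : ℕ) (hn : 0 < n) {x x' : Grid d n} (hne : x ≠ x') :
    Disjoint (cell d n x) (cell d n x') := by
  haveI : NeZero n := ⟨hn.ne'⟩
  have hex : ∃ i, x i ≠ x' i := by
    by_contra h
    push_neg at h
    exact hne (funext h)
  obtain ⟨i, hi⟩ := hex
  rw [Set.disjoint_left]
  intro y hy hy'
  have h1 := hy i (mem_univ i)
  have h2 := hy' i (mem_univ i)
  simp only [mem_Ico] at h1 h2
  have hvne : (x i).val ≠ (x' i).val := fun h => hi (ZMod.val_injective n h)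
  have hnpos : (0:ℝ) < n := by exact_mod_cast hn
  rcases hvne.lt_or_gt with h | h
  · have hc : ((x i).val : ℝ) + 1 ≤ ((x' i).val : ℝ) := by exact_mod_cast h
    have hd : (((x i).val : ℝ) + 1) / n ≤ ((x' i).val : ℝ) / n :=
      (div_le_div_iff_of_pos_right hnpos).2 hc
    linarith [h1.2, h2.1]
  · have hc : ((x' i).val : ℝ) + 1 ≤ ((x i).val : ℝ) := by exact_mod_cast h
    have hd : (((x' i).val : ℝ) + 1) / n ≤ ((x i).val : ℝ) / n :=
      (div_le_div_iff_of_pos_right hnpos).2 hc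
    linarith [h1.1, h2.2]

lemma cell_union (d n : ℕ) [NeZero n] :
    ⋃ x ∈ (Finset.univ : Finset (Grid d n)), cell d n x
      = Set.univ.pi fun _ : Fin d => Ico (0:ℝ) 1 := by
  have hn : 0 < n := Nat.pos_of_ne_zero (NeZero.ne n)
  have hnpos : (0:ℝ) < n := by exact_mod_cast hn
  ext y
  simp only [Finset.mem_univ, iUnion_true, mem_iUnion, Set.mem_pi, mem_univ, forall_true_left,
    mem_Ico, cell]
  constructor
  · rintro ⟨x, hx⟩
    intro i
    have h := hx i
    have hlt : ((x i).val : ℝ) + 1 ≤ n := by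
      exact_mod_cast Nat.succ_le_of_lt (ZMod.val_lt (x i))
    constructor
    · have h0 : (0:ℝ) ≤ ((x i).val : ℝ) / n := by positivity
      linarith [h.1]
    · have h1 : (((x i).val : ℝ) + 1) / n ≤ 1 := by
        rw [div_le_one hnpos]; exact hlt
      linarith [h.2]
  · intro h
    refine ⟨fun i => ((⌊(n:ℝ) * y i⌋₊ : ℕ) : ZMod n), fun i => ?_⟩
    have h0 : (0:ℝ) ≤ (n:ℝ) * y i := mul_nonneg hnpos.le (h i).1
    have hlt : ⌊(n:ℝ) * y i⌋₊ < n := by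
      rw [Nat.floor_lt h0]
      calc (n:ℝ) * y i < (n:ℝ) * 1 := mul_lt_mul_of_pos_left (h i).2 hnpos
        _ = n := mul_one _
    rw [ZMod.val_cast_of_lt hlt]
    constructor
    · rw [div_le_iff₀ hnpos]
      have := Nat.floor_le h0
      nlinarith
    · rw [lt_div_iff₀ hnpos]
      have := Nat.lt_floor_add_one ((n:ℝ) * y i)
      push_cast
      nlinarith

lemma cell_partition (d n : ℕ) [NeZero n] {f : (Fin d → ℝ) → ℝ} {C : ℝ}
    (hf : Measurable f) (hb : ∀ y, |f y| ≤ C) :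
    ∑ x : Grid d n, ∫ y in cell d n x, f y
      = ∫ y in Set.univ.pi fun _ : Fin d => Ico (0:ℝ) 1, f y := by
  have hn : 0 < n := Nat.pos_of_ne_zero (NeZero.ne n)
  rw [← cell_union d n, integral_biUnion_finset Finset.univ
    (fun x _ => cell_meas d n x) ?_ (fun x _ => cell_integrableOn d n x hf hb)]
  intro x _ x' _ hne
  exact cell_disjoint d n hn hne

set_option maxHeartbeats 2000000 in
lemma moment_bound {Ω : Type*} [MeasurableSpace Ω] (P : Measure Ω) [IsProbabilityMeasure P]
    {G : Type*} [MeasurableSpace G] [MeasurableSingletonClass G] [Countable G] [DecidableEq G]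
    {m : ℕ} (lam : Fin m → Ω → ℝ) (Y : Fin m → Ω → G)
    (lamStar b : ℝ) (hb : b ∈ Icc 0 lamStar)
    (hlamMeas : ∀ j, Measurable (lam j))
    (hYMeas : ∀ j, Measurable (Y j))
    (hlamIndep : iIndepFun lam P)
    (hlamBound : ∀ j ω, lam j ω ∈ Icc 0 lamStar)
    (hlamMean : ∀ j, ∫ ω, lam j ω ∂P = b)
    (hYIndep : iIndepFun Y P)
    (hfamIndep : IndepFun (fun ω j => lam j ω) (fun ω j => Y j ω) P)
    {p : G → ℝ} (hp : ∀ j x, (P {ω | Y j ω = x}).toReal = p x)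
    (hp0 : ∀ x, 0 ≤ p x) (hp1 : ∀ x, p x ≤ 1)
    {Nr Ibar : ℝ} (hNr : 0 < Nr) (hmN : |(m:ℝ) - Nr * Ibar| ≤ 1) (x : G) :
    ∫ ω, (Nr⁻¹ * (∑ j, lam j ω * (if Y j ω = x then (1:ℝ) else 0)) - b * Ibar * p x) ^ 2 ∂P
      ≤ lamStar ^ 2 * ((m : ℝ) * p x + p x ^ 2) / Nr ^ 2 := by
  have hls : 0 ≤ lamStar := le_trans hb.1 hb.2
  set ind : Fin m → Ω → ℝ := fun j ω => if Y j ω = x then 1 else 0 with hind_def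
  set Z : Fin m → Ω → ℝ := fun j ω => lam j ω * ind j ω with hZ_def
  set S : Ω → ℝ := fun ω => Nr⁻¹ * ∑ j, Z j ω with hS_def
  set c : ℝ := b * Ibar * p x with hc_def
  have hindMeas : ∀ j, Measurable (ind j) := fun j =>
    Measurable.ite ((hYMeas j) (measurableSet_singleton x)) measurable_const measurable_const
  have hindBd : ∀ j ω, ind j ω ∈ Icc (0:ℝ) 1 := by
    intro j ω; dsimp only [ind]; split <;> simp
  have habs : ∀ j ω, |lam j ω| ≤ lamStar := fun j ω =>
    abs_le.2 ⟨by linarith [(hlamBound j ω).1], (hlamBound j ω).2⟩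
  have hiabs : ∀ j ω, |ind j ω| ≤ 1 := fun j ω =>
    abs_le.2 ⟨by linarith [(hindBd j ω).1], (hindBd j ω).2⟩
  have hZMeas : ∀ j, Measurable (Z j) := fun j => (hlamMeas j).mul (hindMeas j)
  have hZBd : ∀ j ω, |Z j ω| ≤ lamStar := by
    intro j ω
    calc |Z j ω| = |lam j ω| * |ind j ω| := abs_mul _ _
      _ ≤ lamStar * 1 := mul_le_mul (habs j ω) (hiabs j ω) (abs_nonneg _) hls
      _ = lamStar := mul_one _
  have hZint : ∀ j, Integrable (Z j) P := fun j => integrable_of_bdd (hZMeas j) (hZBd j)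
  have hlamInt : ∀ j, Integrable (lam j) P := fun j => integrable_of_bdd (hlamMeas j) (habs j)
  have hlam2Int : ∀ j j' : Fin m, Integrable (fun ω => lam j ω * lam j' ω) P := fun j j' =>
    integrable_of_bdd ((hlamMeas j).mul (hlamMeas j')) (fun ω => by
      rw [abs_mul]
      exact mul_le_mul (habs j ω) (habs j' ω) (abs_nonneg _) hls)
  have hindInt : ∀ j, Integrable (ind j) P := fun j => integrable_of_bdd (hindMeas j) (hiabs j)
  have hind2Int : ∀ j j' : Fin m, Integrable (fun ω => ind j ω * ind j' ω) P := fun j j' =>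
    integrable_of_bdd ((hindMeas j).mul (hindMeas j')) (fun ω => by
      rw [abs_mul]
      exact mul_le_mul (hiabs j ω) (hiabs j' ω) (abs_nonneg _) zero_le_one)
  have hZZInt : ∀ j j' : Fin m, Integrable (fun ω => Z j ω * Z j' ω) P := fun j j' =>
    integrable_of_bdd ((hZMeas j).mul (hZMeas j')) (fun ω => by
      rw [abs_mul]
      calc |Z j ω| * |Z j' ω| ≤ lamStar * lamStar :=
            mul_le_mul (hZBd j ω) (hZBd j' ω) (abs_nonneg _) hls
        _ = lamStar * lamStar := rfl)
  -- ∫ ind j = p x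
  have hintind : ∀ j, ∫ ω, ind j ω ∂P = p x := by
    intro j
    have hs : MeasurableSet (Y j ⁻¹' {x}) := (hYMeas j) (measurableSet_singleton x)
    have he : ind j = (Y j ⁻¹' {x}).indicator (fun _ => (1:ℝ)) := by
      funext ω
      by_cases h : Y j ω = x <;> simp [ind, Set.indicator_apply, h]
    rw [he, integral_indicator_const (1:ℝ) hs, smul_eq_mul, mul_one]
    exact hp j x
  have hψ1 : Measurable (fun g : G => if g = x then (1:ℝ) else 0) := measurable_of_countable _
  have hindprod : ∀ j j' : Fin m, j ≠ j' → ∫ ω, ind j ω * ind j' ω ∂P = p x * p x := by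
    intro j j' hne
    have hI : IndepFun (ind j) (ind j') P := (hYIndep.indepFun hne).comp hψ1 hψ1
    have h2 := hI.integral_mul_eq_mul_integral (hindInt j).aestronglyMeasurable (hindInt j').aestronglyMeasurable
    rw [hintind j, hintind j'] at h2
    exact h2
  have hlamprod : ∀ j j' : Fin m, j ≠ j' → ∫ ω, lam j ω * lam j' ω ∂P = b * b := by
    intro j j' hne
    have h2 := (hlamIndep.indepFun hne).integral_mul_eq_mul_integral (hlamInt j).aestronglyMeasurable
      (hlamInt j').aestronglyMeasurable
    rw [hlamMean j, hlamMean j'] at h2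
    exact h2
  have hfact : ∀ j j' : Fin m, ∫ ω, Z j ω * Z j' ω ∂P
      = (∫ ω, lam j ω * lam j' ω ∂P) * (∫ ω, ind j ω * ind j' ω ∂P) := by
    intro j j'
    have hφ : Measurable (fun v : Fin m → ℝ => v j * v j') :=
      (measurable_pi_apply j).mul (measurable_pi_apply j')
    have hψ : Measurable (fun w : Fin m → G =>
        (if w j = x then (1:ℝ) else 0) * (if w j' = x then (1:ℝ) else 0)) :=
      measurable_of_countable _
    have hI : IndepFun (fun ω => lam j ω * lam j' ω) (fun ω => ind j ω * ind j' ω) P :=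
      hfamIndep.comp hφ hψ
    have h1 := hI.integral_mul_eq_mul_integral (hlam2Int j j').aestronglyMeasurable
      (hind2Int j j').aestronglyMeasurable
    have he : (fun ω => Z j ω * Z j' ω)
        = fun ω => (lam j ω * lam j' ω) * (ind j ω * ind j' ω) := by
      funext ω; dsimp only [Z]; ring
    rw [he]
    exact h1
  -- diagonal: ∫ ind * ind = ∫ ind
  have hinddiag : ∀ j : Fin m, ∫ ω, ind j ω * ind j ω ∂P = p x := by
    intro j
    have he : (fun ω => ind j ω * ind j ω) = ind j := by
      funext ω; dsimp only [ind]; split <;> norm_num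
    rw [he]; exact hintind j
  -- second moment of lam
  have hlamsq : ∀ j : Fin m, ∫ ω, lam j ω * lam j ω ∂P ≤ lamStar ^ 2 := by
    intro j
    calc ∫ ω, lam j ω * lam j ω ∂P ≤ ∫ _, lamStar ^ 2 ∂P := by
          refine integral_mono (hlam2Int j j) (integrable_const _) (fun ω => ?_)
          have h1 := hlamBound j ω
          nlinarith [h1.1, h1.2]
      _ = lamStar ^ 2 := by simp [measure_univ]
  have hlamsq0 : ∀ j : Fin m, 0 ≤ ∫ ω, lam j ω * lam j ω ∂P := fun j =>
    integral_nonneg (fun ω => mul_self_nonneg _)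
  set E2 : ℝ := ∑ j : Fin m, ∫ ω, lam j ω * lam j ω ∂P with hE2_def
  have hE2a : 0 ≤ E2 := Finset.sum_nonneg fun j _ => hlamsq0 j
  have hE2b : E2 ≤ (m:ℝ) * lamStar ^ 2 := by
    calc E2 ≤ ∑ _j : Fin m, lamStar ^ 2 := Finset.sum_le_sum fun j _ => hlamsq j
      _ = (m:ℝ) * lamStar ^ 2 := by simp [Finset.sum_const, mul_comm]
  -- ∫ S
  have hEZ : ∀ j : Fin m, ∫ ω, Z j ω ∂P = b * p x := by
    intro j
    have hφ : Measurable (fun v : Fin m → ℝ => v j) := measurable_pi_apply j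
    have hψ : Measurable (fun w : Fin m → G => if w j = x then (1:ℝ) else 0) :=
      measurable_of_countable _
    have hI : IndepFun (lam j) (ind j) P := hfamIndep.comp hφ hψ
    have h1 := hI.integral_mul_eq_mul_integral (hlamInt j).aestronglyMeasurable (hindInt j).aestronglyMeasurable
    rw [hlamMean j, hintind j] at h1
    exact h1
  have hIS : ∫ ω, S ω ∂P = Nr⁻¹ * ((m:ℝ) * (b * p x)) := by
    dsimp only [S]
    rw [integral_const_mul _ _, integral_finset_sum Finset.univ (fun j _ => hZint j)]
    congr 1
    rw [Finset.sum_congr rfl (fun j _ => hEZ j)]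
    simp [Finset.sum_const, mul_comm]
  -- ∫ S²
  have hpairsum : ∑ j : Fin m, ∑ j' : Fin m, ∫ ω, Z j ω * Z j' ω ∂P
      = (m:ℝ) * (m:ℝ) * (b * p x) ^ 2 + (E2 * p x - (m:ℝ) * (b * p x) ^ 2) := by
    have hsplit : ∀ j j' : Fin m, ∫ ω, Z j ω * Z j' ω ∂P
        = (b * p x) ^ 2 + (if j' = j then (∫ ω, lam j ω * lam j ω ∂P) * p x - (b * p x) ^ 2
            else 0) := by
      intro j j'
      by_cases h : j' = j
      · subst h
        rw [hfact j' j', hinddiag j']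
        simp
      · rw [hfact j j', hindprod j j' (fun hh => h hh.symm), hlamprod j j' (fun hh => h hh.symm)]
        simp [h]
        ring
    calc ∑ j : Fin m, ∑ j' : Fin m, ∫ ω, Z j ω * Z j' ω ∂P
        = ∑ j : Fin m, ((m:ℝ) * (b * p x) ^ 2
            + ((∫ ω, lam j ω * lam j ω ∂P) * p x - (b * p x) ^ 2)) := by
          refine Finset.sum_congr rfl (fun j _ => ?_)
          rw [Finset.sum_congr rfl (fun j' _ => hsplit j j')]
          rw [Finset.sum_add_distrib, Finset.sum_const, Finset.sum_ite_eq' Finset.univ j]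
          simp [mul_comm]
      _ = (m:ℝ) * ((m:ℝ) * (b * p x) ^ 2) + (E2 * p x - (m:ℝ) * (b * p x) ^ 2) := by
          rw [Finset.sum_add_distrib, Finset.sum_const]
          simp only [Finset.card_univ, Fintype.card_fin, nsmul_eq_mul]
          congr 1
          rw [Finset.sum_sub_distrib, ← Finset.sum_mul, ← hE2_def]
          simp [Finset.sum_const, mul_comm]
      _ = (m:ℝ) * (m:ℝ) * (b * p x) ^ 2 + (E2 * p x - (m:ℝ) * (b * p x) ^ 2) := by ring
  have hSsqInt : Integrable (fun ω => S ω ^ 2) P := by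
    have hSMeas : Measurable S := (Finset.measurable_sum Finset.univ
      (fun j _ => hZMeas j)).const_mul _
    refine integrable_of_bdd (hSMeas.pow_const 2) (C := (Nr⁻¹ * ((m:ℝ) * lamStar)) ^ 2)
      (fun ω => ?_)
    rw [abs_pow]
    refine pow_le_pow_left₀ (abs_nonneg _) ?_ 2
    dsimp only [S]
    calc |Nr⁻¹ * ∑ j, Z j ω| = |Nr⁻¹| * |∑ j, Z j ω| := abs_mul _ _
      _ ≤ Nr⁻¹ * ((m:ℝ) * lamStar) := by
          rw [abs_of_pos (inv_pos.2 hNr)]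
          refine mul_le_mul_of_nonneg_left ?_ (inv_pos.2 hNr).le
          calc |∑ j, Z j ω| ≤ ∑ j, |Z j ω| := Finset.abs_sum_le_sum_abs _ _
            _ ≤ ∑ _j : Fin m, lamStar := Finset.sum_le_sum (fun j _ => hZBd j ω)
            _ = (m:ℝ) * lamStar := by simp [Finset.sum_const, mul_comm]
  have hIS2 : ∫ ω, S ω ^ 2 ∂P = (Nr⁻¹) ^ 2
      * ((m:ℝ) * (m:ℝ) * (b * p x) ^ 2 + (E2 * p x - (m:ℝ) * (b * p x) ^ 2)) := by
    have he : (fun ω => S ω ^ 2)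
        = fun ω => (Nr⁻¹) ^ 2 * ∑ j : Fin m, ∑ j' : Fin m, Z j ω * Z j' ω := by
      funext ω
      dsimp only [S]
      rw [mul_pow]
      congr 1
      rw [sq, Finset.sum_mul_sum]
    rw [he, integral_const_mul _ _, integral_finset_sum Finset.univ
      (fun j _ => integrable_finset_sum Finset.univ (fun j' _ => hZZInt j j'))]
    congr 1
    rw [Finset.sum_congr rfl (fun j _ => integral_finset_sum Finset.univ
      (fun j' _ => hZZInt j j'))]
    exact hpairsum
  -- expand the square
  have hSInt : Integrable S P :=
    (integrable_finset_sum Finset.univ (fun j _ => hZint j)).const_mul _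
  have hexp : ∫ ω, (S ω - c) ^ 2 ∂P = ∫ ω, S ω ^ 2 ∂P + ((-(2*c)) * ∫ ω, S ω ∂P + c ^ 2) := by
    have he : (fun ω => (S ω - c) ^ 2)
        = fun ω => S ω ^ 2 + ((-(2*c)) * S ω + c ^ 2) := by
      funext ω; ring
    have hg1 : Integrable (fun ω => (-(2*c)) * S ω) P := hSInt.const_mul _
    have hg2 : Integrable (fun ω => (-(2*c)) * S ω + c ^ 2) P := hg1.add (integrable_const _)
    rw [he, integral_add (f := fun ω => S ω ^ 2)
      (g := fun ω => (-(2*c)) * S ω + c ^ 2) hSsqInt hg2,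
      integral_add (f := fun ω => (-(2*c)) * S ω) (g := fun _ => c ^ 2) hg1 (integrable_const _),
      integral_const_mul _ _]
    simp [measure_univ]
  -- final algebra
  rw [hexp, hIS2, hIS]
  have hu2 : ((m:ℝ) - Nr * Ibar) ^ 2 ≤ 1 := by
    have h := abs_le.1 hmN
    nlinarith [h.1, h.2]
  have hb2 : b ^ 2 ≤ lamStar ^ 2 := by nlinarith [hb.1, hb.2]
  have hNr' : Nr ≠ 0 := hNr.ne'
  have hkey : (Nr⁻¹) ^ 2 * ((m:ℝ) * (m:ℝ) * (b * p x) ^ 2 + (E2 * p x - (m:ℝ) * (b * p x) ^ 2))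
      + ((-(2*c)) * (Nr⁻¹ * ((m:ℝ) * (b * p x))) + c ^ 2)
      = (E2 * p x - (m:ℝ) * b ^ 2 * p x ^ 2
          + b ^ 2 * p x ^ 2 * ((m:ℝ) - Nr * Ibar) ^ 2) / Nr ^ 2 := by
    dsimp only [c]
    field_simp
    ring
  rw [hkey]
  gcongr
  have h1 : E2 * p x ≤ (m:ℝ) * lamStar ^ 2 * p x :=
    mul_le_mul_of_nonneg_right hE2b (hp0 x)
  have h2 : (0:ℝ) ≤ (m:ℝ) * b ^ 2 * p x ^ 2 := by positivity
  have h3 : b ^ 2 * p x ^ 2 * ((m:ℝ) - Nr * Ibar) ^ 2 ≤ lamStar ^ 2 * p x ^ 2 := by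
    calc b ^ 2 * p x ^ 2 * ((m:ℝ) - Nr * Ibar) ^ 2 ≤ b ^ 2 * p x ^ 2 * 1 :=
          mul_le_mul_of_nonneg_left hu2 (by positivity)
      _ = b ^ 2 * p x ^ 2 := mul_one _
      _ ≤ lamStar ^ 2 * p x ^ 2 := mul_le_mul_of_nonneg_right hb2 (sq_nonneg _)
  nlinarith [h1, h2, h3]

set_option maxHeartbeats 1000000 in
lemma expSup_bound {Ω : Type} [MeasurableSpace Ω] (P : Measure Ω) [IsProbabilityMeasure P]
    {G : Type} [MeasurableSpace G] [MeasurableSingletonClass G] [Fintype G] [Nonempty G]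
    [DecidableEq G]
    {m : ℕ} (lam : Fin m → Ω → ℝ) (Y : Fin m → Ω → G)
    (lamStar b : ℝ) (hb : b ∈ Icc 0 lamStar)
    (hlamMeas : ∀ j, Measurable (lam j))
    (hYMeas : ∀ j, Measurable (Y j))
    (hlamIndep : iIndepFun lam P)
    (hlamBound : ∀ j ω, lam j ω ∈ Icc 0 lamStar)
    (hlamMean : ∀ j, ∫ ω, lam j ω ∂P = b)
    (hYIndep : iIndepFun Y P)
    (hfamIndep : IndepFun (fun ω j => lam j ω) (fun ω j => Y j ω) P)
    {p : G → ℝ} (hp : ∀ j x, (P {ω | Y j ω = x}).toReal = p x)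
    (hm1 : 0 < m)
    {Nr Ibar : ℝ} (hNr : 0 < Nr) (hmN : |(m:ℝ) - Nr * Ibar| ≤ 1)
    {c : G → ℝ} (hc : ∀ x, c x = b * Ibar * p x) :
    ∫ ω, (⨆ x : G, |Nr⁻¹ * (∑ j, lam j ω * (if Y j ω = x then (1:ℝ) else 0)) - c x| ^ 2) ∂P
      ≤ lamStar ^ 2 * ((m : ℝ) + 1) / Nr ^ 2 := by
  have hls : 0 ≤ lamStar := le_trans hb.1 hb.2
  set j0 : Fin m := ⟨0, hm1⟩ with hj0
  have hp0 : ∀ x, 0 ≤ p x := fun x => (hp j0 x) ▸ ENNReal.toReal_nonneg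
  have hpsum : ∑ x : G, p x = 1 := by
    have h1 : ∑ x : G, P (Y j0 ⁻¹' {x}) = P (Y j0 ⁻¹' (↑(Finset.univ : Finset G))) :=
      sum_measure_preimage_singleton _ (fun y _ => (hYMeas j0) (measurableSet_singleton y))
    rw [Finset.coe_univ, Set.preimage_univ, measure_univ] at h1
    have h2 : ∑ x : G, p x = (∑ x : G, P (Y j0 ⁻¹' {x})).toReal := by
      rw [ENNReal.toReal_sum (fun x _ => measure_ne_top _ _)]
      exact Finset.sum_congr rfl (fun x _ => (hp j0 x).symm)
    rw [h2, h1, ENNReal.toReal_one]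
  have hp1 : ∀ x, p x ≤ 1 := by
    intro x
    have := Finset.single_le_sum (f := p) (fun y _ => hp0 y) (Finset.mem_univ x)
    rwa [hpsum] at this
  set D : G → Ω → ℝ := fun x ω =>
    Nr⁻¹ * (∑ j, lam j ω * (if Y j ω = x then (1:ℝ) else 0)) - c x with hD
  have hDmeas : ∀ x, Measurable (D x) := by
    intro x
    apply Measurable.sub _ measurable_const
    apply Measurable.const_mul
    apply Finset.measurable_sum
    intro j _
    exact (hlamMeas j).mul (Measurable.ite ((hYMeas j) (measurableSet_singleton x))
      measurable_const measurable_const)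
  have hDbd : ∀ x ω, |D x ω| ≤ Nr⁻¹ * ((m:ℝ) * lamStar) + |c x| := by
    intro x ω
    refine (abs_sub _ _).trans ?_
    gcongr
    rw [abs_mul, abs_of_pos (inv_pos.2 hNr)]
    refine mul_le_mul_of_nonneg_left ?_ (inv_pos.2 hNr).le
    calc |∑ j, lam j ω * (if Y j ω = x then (1:ℝ) else 0)|
        ≤ ∑ j, |lam j ω * (if Y j ω = x then (1:ℝ) else 0)| := Finset.abs_sum_le_sum_abs _ _
      _ ≤ ∑ _j : Fin m, lamStar := by
          refine Finset.sum_le_sum (fun j _ => ?_)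
          rw [abs_mul]
          have h1 : |lam j ω| ≤ lamStar :=
            abs_le.2 ⟨by linarith [(hlamBound j ω).1], (hlamBound j ω).2⟩
          have h2 : |if Y j ω = x then (1:ℝ) else 0| ≤ 1 := by split <;> norm_num
          calc |lam j ω| * |if Y j ω = x then (1:ℝ) else 0| ≤ lamStar * 1 :=
                mul_le_mul h1 h2 (abs_nonneg _) hls
            _ = lamStar := mul_one _
      _ = (m:ℝ) * lamStar := by simp [Finset.sum_const, mul_comm]
  have hDsqInt : ∀ x, Integrable (fun ω => (D x ω) ^ 2) P := by
    intro x
    refine integrable_of_bdd ((hDmeas x).pow_const 2)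
      (C := (Nr⁻¹ * ((m:ℝ) * lamStar) + |c x|) ^ 2) (fun ω => ?_)
    rw [abs_pow]
    exact pow_le_pow_left₀ (abs_nonneg _) (hDbd x ω) 2
  have hptw : ∀ ω, (⨆ x : G, |D x ω| ^ 2) ≤ ∑ x : G, (D x ω) ^ 2 := by
    intro ω
    refine ciSup_le (fun x => ?_)
    rw [sq_abs]
    exact Finset.single_le_sum (f := fun y => D y ω ^ 2) (fun y _ => sq_nonneg _)
      (Finset.mem_univ x)
  have hnn : ∀ ω, 0 ≤ ⨆ x : G, |D x ω| ^ 2 :=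
    fun ω => Real.iSup_nonneg (fun x => by positivity)
  calc ∫ ω, (⨆ x : G, |D x ω| ^ 2) ∂P ≤ ∫ ω, ∑ x : G, (D x ω) ^ 2 ∂P :=
        integral_mono_of_nonneg (Eventually.of_forall hnn)
          (integrable_finset_sum Finset.univ (fun x _ => hDsqInt x))
          (Eventually.of_forall hptw)
    _ = ∑ x : G, ∫ ω, (D x ω) ^ 2 ∂P :=
        integral_finset_sum Finset.univ (fun x _ => hDsqInt x)
    _ ≤ ∑ x : G, lamStar ^ 2 * ((m:ℝ) * p x + p x ^ 2) / Nr ^ 2 := by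
        refine Finset.sum_le_sum (fun x _ => ?_)
        have := moment_bound P lam Y lamStar b hb hlamMeas hYMeas hlamIndep hlamBound
          hlamMean hYIndep hfamIndep hp hp0 hp1 hNr hmN x
        simp only [hD, hc x]
        exact this
    _ = lamStar ^ 2 * ((m:ℝ) * ∑ x : G, p x + ∑ x : G, p x ^ 2) / Nr ^ 2 := by
        rw [← Finset.sum_div]
        congr 1
        rw [← Finset.mul_sum]
        congr 1
        rw [Finset.sum_add_distrib, Finset.mul_sum]
    _ ≤ lamStar ^ 2 * ((m:ℝ) + 1) / Nr ^ 2 := by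
        have hsq : ∑ x : G, p x ^ 2 ≤ 1 := by
          rw [← hpsum]
          exact Finset.sum_le_sum (fun x _ => by nlinarith [hp0 x, hp1 x])
        gcongr
        rw [hpsum, mul_one]

/-- Lemma `ff0`: law of large numbers, uniform in space and in
`t ∈ [0,T]`, for the initial infectivity process, along any sequence with `N_k → ∞`,
`ε_k = 1/n_k → 0` and `N_k ε_k^d → ∞`.  Here the grid size is `n_k = ns k + 1 ≥ 1`. -/
theorem initial_infectivity_LLN
    (d : ℕ) (hd : 1 ≤ d) (νI lamStar C₀ T : ℝ)
    (hν : 0 < νI) (hls : 0 < lamStar) (hC₀ : 0 < C₀) (hT : 0 < T)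
    (I₀ : (Fin d → ℝ) → ℝ) (hI₀c : Continuous I₀)
    (hI₀per : ∀ y i, I₀ (Function.update y i (y i + 1)) = I₀ y)
    (hI₀b : ∀ y, I₀ y ∈ Icc 0 C₀)
    (hI₀pos : 0 < ∫ y in Set.univ.pi (fun _ : Fin d => Ico (0:ℝ) 1), I₀ y)
    (lam0 : ℝ → ℝ) (hlam0m : Measurable lam0) (hlam0b : ∀ t, lam0 t ∈ Icc 0 lamStar)
    (ns N m : ℕ → ℕ)
    (hN : Tendsto (fun k => (N k : ℝ)) atTop atTop)
    (hns : Tendsto (fun k => (ns k : ℝ)) atTop atTop)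
    (hNeps : Tendsto (fun k => (N k : ℝ) / ((ns k : ℝ) + 1) ^ d) atTop atTop)
    (hm : ∀ k, |(m k : ℝ) -
      (N k : ℝ) * ∑ x : Grid d (ns k + 1), cellAvg d (ns k + 1) I₀ x| ≤ 1)
    (Ω : ℕ → Type) (mΩ : ∀ k, MeasurableSpace (Ω k)) (P : ∀ k, Measure (Ω k))
    (hP : ∀ k, IsProbabilityMeasure (P k))
    (lam : ∀ k, ℝ → Fin (m k) → Ω k → ℝ)
    (Y : ∀ k, ℝ → Fin (m k) → Ω k → Grid d (ns k + 1))
    (hlamMeas : ∀ k, ∀ t ∈ Icc (0:ℝ) T, ∀ j, Measurable (lam k t j))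
    (hYMeas : ∀ k, ∀ t ∈ Icc (0:ℝ) T, ∀ j, Measurable (Y k t j))
    (hlamIndep : ∀ k, ∀ t ∈ Icc (0:ℝ) T,
      iIndepFun (lam k t) (P k))
    (hlamIdent : ∀ k, ∀ t ∈ Icc (0:ℝ) T, ∀ i j,
      IdentDistrib (lam k t i) (lam k t j) (P k) (P k))
    (hlamBound : ∀ k, ∀ t ∈ Icc (0:ℝ) T, ∀ j ω, lam k t j ω ∈ Icc 0 lamStar)
    (hlamMean : ∀ k, ∀ t ∈ Icc (0:ℝ) T, ∀ j, ∫ ω, lam k t j ω ∂(P k) = lam0 t)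
    (hYIndep : ∀ k, ∀ t ∈ Icc (0:ℝ) T,
      iIndepFun (Y k t) (P k))
    (hYLaw : ∀ k, ∀ t ∈ Icc (0:ℝ) T, ∀ j x, ((P k) {ω | Y k t j ω = x}).toReal =
      ∑ y : Grid d (ns k + 1),
        (cellAvg d (ns k + 1) I₀ y / ∑ z : Grid d (ns k + 1), cellAvg d (ns k + 1) I₀ z) *
          heatKer d (ns k + 1) νI 0 t y x)
    (hfamIndep : ∀ k, ∀ t ∈ Icc (0:ℝ) T,
      IndepFun (fun ω j => lam k t j ω) (fun ω j => Y k t j ω) (P k)) :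
    Tendsto (fun k =>
      ⨆ t ∈ Icc (0:ℝ) T, ∫ ω, (⨆ x : Grid d (ns k + 1),
        |(N k : ℝ)⁻¹ * (∑ j, lam k t j ω * (if Y k t j ω = x then (1:ℝ) else 0))
          - lam0 t * ∑ y : Grid d (ns k + 1),
              cellAvg d (ns k + 1) I₀ y * heatKer d (ns k + 1) νI 0 t y x| ^ 2) ∂(P k))
      atTop (nhds 0) := by
  classical
  have hI₀abs : ∀ y, |I₀ y| ≤ C₀ := fun y =>
    abs_le.2 ⟨by linarith [(hI₀b y).1], (hI₀b y).2⟩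
  set J : ℝ := ∫ y in Set.univ.pi (fun _ : Fin d => Ico (0:ℝ) 1), I₀ y with hJdef
  have hJpos : 0 < J := hI₀pos
  have hcube_meas : MeasurableSet (Set.univ.pi fun _ : Fin d => Ico (0:ℝ) 1) :=
    MeasurableSet.univ_pi fun _ => measurableSet_Ico
  have hJC : J ≤ C₀ := by
    have h1 : J ≤ ∫ _y in Set.univ.pi (fun _ : Fin d => Ico (0:ℝ) 1), C₀ :=
      setIntegral_mono_on (cube_integrableOn d hI₀c.measurable hI₀abs)
        (integrableOn_const (cube_vol_lt_top d).ne) hcube_meas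
        (fun y _ => (hI₀b y).2)
    rw [setIntegral_const, smul_eq_mul] at h1
    have hv : (volume (Set.univ.pi fun _ : Fin d => Ico (0:ℝ) 1)).toReal = 1 := by
      rw [Real.volume_pi_Ico]; simp
    rw [measureReal_def, hv, one_mul] at h1
    exact h1
  have hIbar : ∀ k, (∑ x : Grid d (ns k + 1), cellAvg d (ns k + 1) I₀ x)
      = ((ns k : ℝ) + 1) ^ d * J := by
    intro k
    have h := cell_partition d (ns k + 1) (f := I₀) hI₀c.measurable hI₀abs
    unfold cellAvg
    rw [← Finset.mul_sum, h, ← hJdef]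
    push_cast
    ring
  -- the deterministic bound
  set bnd : ℕ → ℝ := fun k =>
    lamStar ^ 2 * (C₀ * (((ns k : ℝ) + 1) ^ d / (N k : ℝ)) + 2 / (N k : ℝ) ^ 2) with hbnd
  have hbnd0 : Tendsto bnd atTop (nhds 0) := by
    have t1 : Tendsto (fun k => ((ns k : ℝ) + 1) ^ d / (N k : ℝ)) atTop (nhds 0) := by
      have h := hNeps.inv_tendsto_atTop
      have he : (fun k => (N k : ℝ) / ((ns k : ℝ) + 1) ^ d)⁻¹
          = fun k => ((ns k : ℝ) + 1) ^ d / (N k : ℝ) := by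
        funext k; rw [Pi.inv_apply, inv_div]
      rwa [he] at h
    have t2 : Tendsto (fun k => 2 / (N k : ℝ) ^ 2) atTop (nhds 0) := by
      have h2 : Tendsto (fun k => ((N k : ℝ)) ^ 2) atTop atTop :=
        (tendsto_pow_atTop (two_ne_zero)).comp hN
      have h3 := (h2.inv_tendsto_atTop).const_mul (2:ℝ)
      simpa [div_eq_mul_inv] using h3
    have h4 := ((t1.const_mul C₀).add t2).const_mul (lamStar ^ 2)
    simpa using h4
  -- nonnegativity of the sequence
  have hseq0 : ∀ k, 0 ≤ ⨆ t ∈ Icc (0:ℝ) T, ∫ ω, (⨆ x : Grid d (ns k + 1),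
      |(N k : ℝ)⁻¹ * (∑ j, lam k t j ω * (if Y k t j ω = x then (1:ℝ) else 0))
        - lam0 t * ∑ y : Grid d (ns k + 1),
            cellAvg d (ns k + 1) I₀ y * heatKer d (ns k + 1) νI 0 t y x| ^ 2) ∂(P k) := by
    intro k
    refine Real.iSup_nonneg (fun t => Real.iSup_nonneg (fun ht => ?_))
    refine integral_nonneg (fun ω => ?_)
    exact Real.iSup_nonneg (fun x => by positivity)
  -- eventual upper bound
  have hev : ∀ᶠ k in atTop, (1:ℝ) ≤ (N k : ℝ) ∧ 2 / J ≤ (N k : ℝ) :=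
    (hN.eventually_ge_atTop 1).and (hN.eventually_ge_atTop (2 / J))
  refine squeeze_zero' (Eventually.of_forall hseq0) (hev.mono (fun k hk => ?_)) hbnd0
  obtain ⟨hk1, hk2⟩ := hk
  haveI := hP k
  have hNpos : (0:ℝ) < (N k : ℝ) := lt_of_lt_of_le one_pos hk1
  have hpow1 : (1:ℝ) ≤ ((ns k : ℝ) + 1) ^ d := by
    have h1 : (1:ℝ) ≤ (ns k : ℝ) + 1 := le_add_of_nonneg_left (by positivity)
    exact one_le_pow₀ h1
  have hbndnn : 0 ≤ bnd k := by
    have : (0:ℝ) ≤ ((ns k : ℝ) + 1) ^ d / (N k : ℝ) := by positivity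
    have : (0:ℝ) ≤ 2 / (N k : ℝ) ^ 2 := by positivity
    positivity
  -- m k is positive
  have hmabs := abs_le.1 (hm k)
  have hIbk := hIbar k
  have hmpos : 0 < m k := by
    have hNI : (2:ℝ) ≤ (N k : ℝ) * ∑ x : Grid d (ns k + 1), cellAvg d (ns k + 1) I₀ x := by
      rw [hIbk]
      calc (2:ℝ) = (2 / J) * J := (div_mul_cancel₀ 2 hJpos.ne').symm
        _ ≤ (N k : ℝ) * J := mul_le_mul_of_nonneg_right hk2 hJpos.le
        _ ≤ (N k : ℝ) * (((ns k : ℝ) + 1) ^ d * J) := by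
            rw [← mul_assoc]
            refine mul_le_mul_of_nonneg_right ?_ hJpos.le
            nlinarith [hpow1, hNpos]
    have h1 : (1:ℝ) ≤ (m k : ℝ) := by linarith [hmabs.1]
    exact_mod_cast lt_of_lt_of_le zero_lt_one (by exact_mod_cast h1 : 1 ≤ m k)
  -- bound the sup over t
  refine ciSup_le (fun t => ?_)
  by_cases ht : t ∈ Icc (0:ℝ) T
  · rw [ciSup_pos ht]
    -- apply the expectation bound at this t
    set p : Grid d (ns k + 1) → ℝ := fun x => ∑ y : Grid d (ns k + 1),
      (cellAvg d (ns k + 1) I₀ y / ∑ z : Grid d (ns k + 1), cellAvg d (ns k + 1) I₀ z) *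
        heatKer d (ns k + 1) νI 0 t y x with hpdef
    have hS0 : (∑ z : Grid d (ns k + 1), cellAvg d (ns k + 1) I₀ z) ≠ 0 := by
      rw [hIbk]; positivity
    have hc : ∀ x, lam0 t * (∑ y : Grid d (ns k + 1),
        cellAvg d (ns k + 1) I₀ y * heatKer d (ns k + 1) νI 0 t y x)
        = lam0 t * (∑ z : Grid d (ns k + 1), cellAvg d (ns k + 1) I₀ z) * p x := by
      intro x
      have hsp : (∑ z : Grid d (ns k + 1), cellAvg d (ns k + 1) I₀ z) * p x
          = ∑ y : Grid d (ns k + 1),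
              cellAvg d (ns k + 1) I₀ y * heatKer d (ns k + 1) νI 0 t y x := by
        rw [hpdef, Finset.mul_sum]
        refine Finset.sum_congr rfl (fun y _ => ?_)
        field_simp
      rw [← hsp, mul_assoc]
    have hEb := expSup_bound (P k) (lam k t) (Y k t) lamStar (lam0 t) (hlam0b t)
      (hlamMeas k t ht) (hYMeas k t ht) (hlamIndep k t ht) (hlamBound k t ht)
      (hlamMean k t ht) (hYIndep k t ht) (hfamIndep k t ht)
      (p := p) (hYLaw k t ht) hmpos hNpos (hm k)
      (c := fun x => lam0 t * ∑ y : Grid d (ns k + 1),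
        cellAvg d (ns k + 1) I₀ y * heatKer d (ns k + 1) νI 0 t y x) (fun x => hc x)
    refine le_trans hEb ?_
    -- compare with bnd k
    have hmub : (m k : ℝ) + 1 ≤ (N k : ℝ) * (((ns k : ℝ) + 1) ^ d * C₀) + 2 := by
      have h2 := hmabs.2
      rw [hIbk] at h2
      have h3 : (N k : ℝ) * (((ns k : ℝ) + 1) ^ d * J)
          ≤ (N k : ℝ) * (((ns k : ℝ) + 1) ^ d * C₀) := by
        refine mul_le_mul_of_nonneg_left ?_ hNpos.le
        exact mul_le_mul_of_nonneg_left hJC (by positivity)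
      linarith
    have hbeq : bnd k = lamStar ^ 2 * (((N k : ℝ) * (((ns k : ℝ) + 1) ^ d * C₀) + 2)
        / (N k : ℝ) ^ 2) := by
      rw [hbnd]
      field_simp
    rw [hbeq, ← mul_div_assoc]
    rw [show lamStar ^ 2 * ((m k : ℝ) + 1) / (N k : ℝ) ^ 2
      = (lamStar ^ 2 * ((m k : ℝ) + 1)) / (N k : ℝ) ^ 2 from rfl]
    gcongr
  · haveI : IsEmpty (t ∈ Icc (0:ℝ) T) := ⟨ht⟩
    rw [Real.iSup_of_isEmpty]
    exact hbndnn
end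

section
/- Let S̄₀ : T^d → ℝ be continuous with c₀ ≤ S̄₀ ≤ C₀ (0 < c₀ ≤ C₀); set S̄^ε(0,x) := ε^{−d} ∫_{V_ε(x)} S̄₀(y)dy and S̄^ε(0) := Σ_{x ∈ D_ε} S̄^ε(0,x). Let N ≥ 1, let M ∈ ℕ satisfy |M − N S̄^ε(0)| ≤ 1, and let X₁, …, X_M be i.i.d. D_ε-valued random variables with P(X_j = x) = S̄^ε(0,x)/S̄^ε(0). Define S̄^{N,ε}(0,x) := N^{−1} Σ_{j=1}^M 1_{X_j = x}. Then there exist constants C', C'' depending only on c₀, C₀ and d such that E[ sup_{x ∈ D_ε} |S̄^{N,ε}(0,x) − S̄^ε(0,x)|² ] ≤ C'/(N ε^d) + C'' ε^d/N². In particular, this expectation tends to 0 along any sequence (N, ε) with N → ∞, ε → 0 and N ε^d → ∞. -/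
open MeasureTheory ProbabilityTheory Set

lemma cell_volume (d n : ℕ) [NeZero n] (x : Grid d n) :
    volume (cell d n x) = ENNReal.ofReal ((n : ℝ)⁻¹ ^ d) := by
  have hn : (0:ℝ) < n := by exact_mod_cast Nat.pos_of_ne_zero (NeZero.ne n)
  rw [cell, volume_pi_pi]
  have : ∀ i : Fin d, volume (Set.Ico (((x i).val : ℝ) / n) ((((x i).val : ℝ) + 1) / n))
      = ENNReal.ofReal ((n:ℝ)⁻¹) := by
    intro i
    rw [Real.volume_Ico]
    congr 1
    field_simp
    ring
  simp only [this, Finset.prod_const, Finset.card_univ, Fintype.card_fin]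
  rw [← ENNReal.ofReal_pow (by positivity)]

lemma cellAvg_mem (d n : ℕ) [NeZero n] (c₀ C₀ : ℝ) (hc₀ : 0 ≤ c₀)
    (S₀ : (Fin d → ℝ) → ℝ) (hcont : Continuous S₀) (hb : ∀ y, S₀ y ∈ Icc c₀ C₀)
    (x : Grid d n) : cellAvg d n S₀ x ∈ Icc c₀ C₀ := by
  have hn : (0:ℝ) < n := by exact_mod_cast Nat.pos_of_ne_zero (NeZero.ne n)
  have hvol : volume (cell d n x) = ENNReal.ofReal ((n : ℝ)⁻¹ ^ d) := cell_volume d n x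
  have hvolR : (volume (cell d n x)).toReal = (n : ℝ)⁻¹ ^ d := by
    rw [hvol, ENNReal.toReal_ofReal (by positivity)]
  have hfin : volume (cell d n x) ≠ ⊤ := by rw [hvol]; exact ENNReal.ofReal_ne_top
  have hmeas : MeasurableSet (cell d n x) :=
    MeasurableSet.univ_pi fun i => measurableSet_Ico
  have hC0 : (0:ℝ) ≤ C₀ := le_trans hc₀ (le_trans (hb 0).1 ((hb 0).2))
  have hint : IntegrableOn S₀ (cell d n x) volume := by
    apply Measure.integrableOn_of_bounded hfin hcont.aestronglyMeasurable (M := C₀)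
    filter_upwards with y
    rw [Real.norm_eq_abs, abs_le]
    exact ⟨le_trans (by linarith) (hb y).1, (hb y).2⟩
  have h1 : ∫ y in cell d n x, c₀ ∂volume ≤ ∫ y in cell d n x, S₀ y ∂volume :=
    setIntegral_mono_on (integrableOn_const hfin) hint hmeas
      fun y _ => (hb y).1
  have h2 : ∫ y in cell d n x, S₀ y ∂volume ≤ ∫ y in cell d n x, C₀ ∂volume :=
    setIntegral_mono_on hint (integrableOn_const hfin) hmeas
      fun y _ => (hb y).2
  rw [setIntegral_const, measureReal_def, hvolR, smul_eq_mul] at h1 h2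
  have hpow : (n : ℝ) ^ d * ((n:ℝ)⁻¹ ^ d) = 1 := by
    rw [← mul_pow, mul_inv_cancel₀ (ne_of_gt hn), one_pow]
  constructor
  · calc c₀ = (n:ℝ)^d * ((n:ℝ)⁻¹^d * c₀) := by rw [← mul_assoc, hpow, one_mul]
    _ ≤ cellAvg d n S₀ x := mul_le_mul_of_nonneg_left h1 (by positivity)
  · calc cellAvg d n S₀ x ≤ (n:ℝ)^d * ((n:ℝ)⁻¹^d * C₀) :=
        mul_le_mul_of_nonneg_left h2 (by positivity)
    _ = C₀ := by rw [← mul_assoc, hpow, one_mul]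

lemma sq_moment {Ω : Type} [MeasurableSpace Ω] (P : Measure Ω) [IsProbabilityMeasure P]
    {α : Type} [DecidableEq α] [MeasurableSpace α] [MeasurableSingletonClass α]
    {M : ℕ} (X : Fin M → Ω → α) (hX : ∀ j, Measurable (X j))
    (hindep : iIndepFun X P)
    (x : α) (p a c : ℝ) (hp : ∀ j, (P (X j ⁻¹' {x})).toReal = p) :
    Integrable (fun ω => ((c * ∑ j, if X j ω = x then (1:ℝ) else 0) - a)^2) P ∧
    ∫ ω, ((c * ∑ j, if X j ω = x then (1:ℝ) else 0) - a)^2 ∂P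
      = (M:ℝ)*p*(1-p)*c^2 + ((M:ℝ)*p*c - a)^2 := by
  have hA : ∀ j, MeasurableSet (X j ⁻¹' {x}) := fun j => hX j (measurableSet_singleton x)
  have hind_eq : ∀ j ω, (if X j ω = x then (1:ℝ) else 0)
      = (X j ⁻¹' {x}).indicator (fun _ => (1:ℝ)) ω := by
    intro j ω
    by_cases h : X j ω = x <;> simp [Set.indicator_apply, h]
  have hIntInd : ∀ j, Integrable (fun ω => if X j ω = x then (1:ℝ) else 0) P := by
    intro j
    simp only [hind_eq]
    exact (integrable_const 1).indicator (hA j)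
  have hEInd : ∀ j, ∫ ω, (if X j ω = x then (1:ℝ) else 0) ∂P = p := by
    intro j
    simp only [hind_eq]
    rw [integral_indicator_const _ (hA j), smul_eq_mul, mul_one, measureReal_def, hp j]
  have hprod : ∀ i j (ω : Ω), (if X i ω = x then (1:ℝ) else 0) * (if X j ω = x then 1 else 0)
      = ((X i ⁻¹' {x}) ∩ (X j ⁻¹' {x})).indicator (fun _ => (1:ℝ)) ω := by
    intro i j ω
    by_cases h1 : X i ω = x <;> by_cases h2 : X j ω = x <;>
      simp [Set.indicator_apply, h1, h2]
  have hIntProd : ∀ i j, Integrable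
      (fun ω => (if X i ω = x then (1:ℝ) else 0) * (if X j ω = x then 1 else 0)) P := by
    intro i j
    simp only [hprod]
    exact (integrable_const 1).indicator ((hA i).inter (hA j))
  have hEProd : ∀ i j, ∫ ω, (if X i ω = x then (1:ℝ) else 0) * (if X j ω = x then 1 else 0) ∂P
      = if i = j then p else p^2 := by
    intro i j
    simp only [hprod]
    rw [integral_indicator_const _ ((hA i).inter (hA j)), smul_eq_mul, mul_one]
    by_cases hij : i = j
    · subst hij
      rw [Set.inter_self, measureReal_def, hp i, if_pos rfl]
    · rw [if_neg hij, measureReal_def, (hindep.indepFun hij).measure_inter_preimage_eq_mul {x} {x}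
        (measurableSet_singleton x) (measurableSet_singleton x),
        ENNReal.toReal_mul, hp i, hp j, sq]
  have hg : ∀ ω : Ω, ((c * ∑ j, if X j ω = x then (1:ℝ) else 0) - a)^2
      = c^2 * (∑ i, ∑ j, (if X i ω = x then (1:ℝ) else 0) * (if X j ω = x then 1 else 0))
        - 2*a*c*(∑ j, if X j ω = x then (1:ℝ) else 0) + a^2 := by
    intro ω
    rw [← Finset.sum_mul_sum]
    ring
  have hIntSum : Integrable (fun ω =>
      ∑ i, ∑ j, (if X i ω = x then (1:ℝ) else 0) * (if X j ω = x then 1 else 0)) P :=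
    integrable_finset_sum _ fun i _ => integrable_finset_sum _ fun j _ => hIntProd i j
  have hIntS : Integrable (fun ω => ∑ j, if X j ω = x then (1:ℝ) else 0) P :=
    integrable_finset_sum _ fun j _ => hIntInd j
  have hIntG : Integrable (fun ω => ((c * ∑ j, if X j ω = x then (1:ℝ) else 0) - a)^2) P := by
    simp only [hg]
    exact ((hIntSum.const_mul _).sub (hIntS.const_mul _)).add (integrable_const _)
  refine ⟨hIntG, ?_⟩
  simp only [hg]
  have hIntF1 : Integrable (fun ω =>
      c^2 * (∑ i, ∑ j, (if X i ω = x then (1:ℝ) else 0) * (if X j ω = x then 1 else 0))) P :=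
    hIntSum.const_mul _
  have hIntF2 : Integrable (fun ω =>
      2*a*c*(∑ j, if X j ω = x then (1:ℝ) else 0)) P := hIntS.const_mul _
  have hIntF : Integrable (fun ω =>
      c^2 * (∑ i, ∑ j, (if X i ω = x then (1:ℝ) else 0) * (if X j ω = x then 1 else 0))
        - 2*a*c*(∑ j, if X j ω = x then (1:ℝ) else 0)) P := hIntF1.sub hIntF2
  rw [integral_add hIntF (integrable_const _),
    integral_sub hIntF1 hIntF2,
    integral_const_mul, integral_const_mul, integral_const,
    integral_finset_sum _ (fun j _ => hIntInd j)]
  rw [integral_finset_sum _ (fun i _ => integrable_finset_sum _ fun j _ => hIntProd i j)]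
  simp only [fun i => integral_finset_sum (μ := P) Finset.univ (fun j _ => hIntProd i j)]
  simp only [hEProd, hEInd]
  have h1 : ∀ i : Fin M, ∑ j : Fin M, (if i = j then p else p^2) = p + ((M:ℝ) - 1) * p^2 := by
    intro i
    have : ∀ j : Fin M, (if i = j then p else p^2) = p^2 + (if i = j then p - p^2 else 0) := by
      intro j; by_cases h : i = j <;> simp [h]
    simp only [this, Finset.sum_add_distrib, Finset.sum_const, Finset.card_univ,
      Fintype.card_fin, Finset.sum_ite_eq, Finset.mem_univ, if_pos]
    ring
  simp only [h1, Finset.sum_const, Finset.card_univ, Fintype.card_fin, nsmul_eq_mul,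
    smul_eq_mul, measure_univ, probReal_univ, ENNReal.toReal_one, one_mul]
  ring

set_option maxHeartbeats 1000000 in
/-- Lemma `S0`: second-moment bound, uniform over sites, for the difference
between the empirical initial susceptible density and its deterministic counterpart, with
constants depending only on `c₀, C₀, d`. -/
theorem initial_susceptible_density_L2_bound
    (d : ℕ) (hd : 1 ≤ d) (c₀ C₀ : ℝ) (hc₀ : 0 < c₀) (hcC : c₀ ≤ C₀) :
    ∃ C' C'' : ℝ, 0 < C' ∧ 0 < C'' ∧
      ∀ (n : ℕ) [NeZero n],
      ∀ S₀ : (Fin d → ℝ) → ℝ, Continuous S₀ →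
        (∀ y i, S₀ (Function.update y i (y i + 1)) = S₀ y) →
        (∀ y, S₀ y ∈ Icc c₀ C₀) →
      ∀ N : ℕ, 1 ≤ N →
      ∀ M : ℕ, |(M : ℝ) - (N : ℝ) * ∑ x : Grid d n, cellAvg d n S₀ x| ≤ 1 →
      ∀ (Ω : Type) (_ : MeasurableSpace Ω) (P : Measure Ω), IsProbabilityMeasure P →
      ∀ X : Fin M → Ω → Grid d n, (∀ j, Measurable (X j)) →
        iIndepFun X P →
        (∀ j x, (P {ω | X j ω = x}).toReal =
          cellAvg d n S₀ x / ∑ y : Grid d n, cellAvg d n S₀ y) →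
      (∫ ω, (⨆ x : Grid d n,
          |(N : ℝ)⁻¹ * (∑ j, if X j ω = x then (1:ℝ) else 0) - cellAvg d n S₀ x| ^ 2) ∂P) ≤
        C' / ((N : ℝ) * ((n : ℝ)⁻¹) ^ d) + C'' * ((n : ℝ)⁻¹) ^ d / (N : ℝ) ^ 2 := by
  have hC₀ : 0 < C₀ := lt_of_lt_of_le hc₀ hcC
  refine ⟨C₀ + 1, C₀ / c₀, by linarith, by positivity, ?_⟩
  intro n _ S₀ hcont _hper hbdd N hN M hM Ω mΩ P hP X hX hindep hdist
  have hn : (0:ℝ) < n := by exact_mod_cast Nat.pos_of_ne_zero (NeZero.ne n)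
  have hnd : (0:ℝ) < (n:ℝ)^d := by positivity
  have hnd1 : (1:ℝ) ≤ (n:ℝ)^d := one_le_pow₀ (by exact_mod_cast Nat.one_le_iff_ne_zero.2 (NeZero.ne n))
  have hNpos : (0:ℝ) < N := by exact_mod_cast hN
  set T := ∑ x : Grid d n, cellAvg d n S₀ x with hTdef
  have haI : ∀ x, cellAvg d n S₀ x ∈ Icc c₀ C₀ :=
    fun x => cellAvg_mem d n c₀ C₀ hc₀.le S₀ hcont hbdd x
  have hcardN : Fintype.card (Grid d n) = n ^ d := by simp
  have hcard : (Fintype.card (Grid d n) : ℝ) = (n:ℝ)^d := by rw [hcardN]; push_cast; ring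
  have hTle : T ≤ C₀ * (n:ℝ)^d := by
    calc T ≤ ∑ _x : Grid d n, C₀ := Finset.sum_le_sum fun x _ => (haI x).2
    _ = (Fintype.card (Grid d n) : ℝ) * C₀ := by
        rw [Finset.sum_const, Finset.card_univ, nsmul_eq_mul]
    _ = C₀ * (n:ℝ)^d := by rw [hcard]; ring
  have hTge : c₀ * (n:ℝ)^d ≤ T := by
    calc c₀ * (n:ℝ)^d = (Fintype.card (Grid d n) : ℝ) * c₀ := by rw [hcard]; ring
    _ = ∑ _x : Grid d n, c₀ := by rw [Finset.sum_const, Finset.card_univ, nsmul_eq_mul]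
    _ ≤ T := Finset.sum_le_sum fun x _ => (haI x).1
  have hTpos : 0 < T := lt_of_lt_of_le (by positivity) hTge
  set p : Grid d n → ℝ := fun x => cellAvg d n S₀ x / T with hpdef
  have hpnn : ∀ x, 0 ≤ p x := fun x =>
    div_nonneg (le_trans hc₀.le (haI x).1) hTpos.le
  have hpsum : ∑ x : Grid d n, p x = 1 := by
    rw [hpdef, ← Finset.sum_div, ← hTdef, div_self hTpos.ne']
  have hple : ∀ x, p x ≤ C₀ / (c₀ * (n:ℝ)^d) := fun x =>
    div_le_div₀ (by linarith) (haI x).2 (by positivity) hTge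
  have haT : ∀ x, cellAvg d n S₀ x = p x * T := by
    intro x
    rw [hpdef]
    field_simp
  have hp' : ∀ j x, (P (X j ⁻¹' {x})).toReal = p x := by
    intro j x
    have hset : X j ⁻¹' {x} = {ω | X j ω = x} := by ext ω; simp
    rw [hset]
    exact hdist j x
  have hmom := fun x : Grid d n =>
    sq_moment P X hX hindep x (p x) (cellAvg d n S₀ x) ((N:ℝ)⁻¹) (fun j => hp' j x)
  have hsup_le : ∀ ω, (⨆ x : Grid d n,
      |(N : ℝ)⁻¹ * (∑ j, if X j ω = x then (1:ℝ) else 0) - cellAvg d n S₀ x| ^ 2)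
      ≤ ∑ x : Grid d n,
        ((N : ℝ)⁻¹ * (∑ j, if X j ω = x then (1:ℝ) else 0) - cellAvg d n S₀ x) ^ 2 := by
    intro ω
    refine ciSup_le fun x => ?_
    rw [sq_abs]
    exact Finset.single_le_sum (f := fun y : Grid d n =>
        ((N : ℝ)⁻¹ * (∑ j, if X j ω = y then (1:ℝ) else 0) - cellAvg d n S₀ y) ^ 2)
      (fun y _ => sq_nonneg _) (Finset.mem_univ x)
  have hsupnn : ∀ ω : Ω, 0 ≤ ⨆ x : Grid d n,
      |(N : ℝ)⁻¹ * (∑ j, if X j ω = x then (1:ℝ) else 0) - cellAvg d n S₀ x| ^ 2 := by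
    intro ω
    obtain ⟨x₀⟩ : Nonempty (Grid d n) := inferInstance
    calc (0:ℝ) ≤ |(N : ℝ)⁻¹ * (∑ j, if X j ω = x₀ then (1:ℝ) else 0) - cellAvg d n S₀ x₀| ^ 2 := by
          positivity
    _ ≤ _ := le_ciSup (f := fun x : Grid d n =>
          |(N : ℝ)⁻¹ * (∑ j, if X j ω = x then (1:ℝ) else 0) - cellAvg d n S₀ x| ^ 2)
        (Set.Finite.bddAbove (Set.finite_range _)) x₀
  have hIntSum : Integrable (fun ω => ∑ x : Grid d n,
      ((N : ℝ)⁻¹ * (∑ j, if X j ω = x then (1:ℝ) else 0) - cellAvg d n S₀ x) ^ 2) P :=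
    integrable_finset_sum _ fun x _ => (hmom x).1
  have step1 : (∫ ω, (⨆ x : Grid d n,
      |(N : ℝ)⁻¹ * (∑ j, if X j ω = x then (1:ℝ) else 0) - cellAvg d n S₀ x| ^ 2) ∂P)
      ≤ ∫ ω, (∑ x : Grid d n,
        ((N : ℝ)⁻¹ * (∑ j, if X j ω = x then (1:ℝ) else 0) - cellAvg d n S₀ x) ^ 2) ∂P :=
    integral_mono_of_nonneg (Filter.Eventually.of_forall hsupnn) hIntSum
      (Filter.Eventually.of_forall hsup_le)
  have step2 : ∫ ω, (∑ x : Grid d n,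
      ((N : ℝ)⁻¹ * (∑ j, if X j ω = x then (1:ℝ) else 0) - cellAvg d n S₀ x) ^ 2) ∂P
      = ∑ x : Grid d n, ((M:ℝ)*(p x)*(1-(p x))*((N:ℝ)⁻¹)^2
          + ((M:ℝ)*(p x)*(N:ℝ)⁻¹ - cellAvg d n S₀ x)^2) := by
    rw [integral_finset_sum _ fun x _ => (hmom x).1]
    exact Finset.sum_congr rfl fun x _ => (hmom x).2
  have hMsq : ((M:ℝ) - (N:ℝ)*T)^2 ≤ 1 := by
    rw [← sq_abs]
    calc |(M:ℝ) - (N:ℝ)*T| ^ 2 ≤ 1 ^ 2 := by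
          apply pow_le_pow_left₀ (abs_nonneg _) hM
    _ = 1 := one_pow 2
  have hterm : ∀ x : Grid d n, (M:ℝ)*(p x)*(1-(p x))*((N:ℝ)⁻¹)^2
      + ((M:ℝ)*(p x)*(N:ℝ)⁻¹ - cellAvg d n S₀ x)^2
      ≤ (M:ℝ)*(p x)*((N:ℝ)⁻¹)^2 + (p x)^2*((N:ℝ)⁻¹)^2 := by
    intro x
    have h1 : (M:ℝ)*(p x)*(1-(p x))*((N:ℝ)⁻¹)^2 ≤ (M:ℝ)*(p x)*((N:ℝ)⁻¹)^2 := by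
      have hMnn : (0:ℝ) ≤ M := Nat.cast_nonneg M
      nlinarith [hpnn x, sq_nonneg ((N:ℝ)⁻¹), mul_nonneg (mul_nonneg hMnn (hpnn x)) (hpnn x)]
    have h2 : ((M:ℝ)*(p x)*(N:ℝ)⁻¹ - cellAvg d n S₀ x)^2
        = (p x)^2 * ((M:ℝ)*(N:ℝ)⁻¹ - T)^2 := by rw [haT x]; ring
    have h3 : ((M:ℝ)*(N:ℝ)⁻¹ - T)^2 ≤ ((N:ℝ)⁻¹)^2 := by
      have : (M:ℝ)*(N:ℝ)⁻¹ - T = ((M:ℝ) - (N:ℝ)*T) * (N:ℝ)⁻¹ := by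
        field_simp
      rw [this, mul_pow]
      nlinarith [sq_nonneg ((N:ℝ)⁻¹)]
    have h4 : ((M:ℝ)*(p x)*(N:ℝ)⁻¹ - cellAvg d n S₀ x)^2 ≤ (p x)^2*((N:ℝ)⁻¹)^2 := by
      rw [h2]
      exact mul_le_mul_of_nonneg_left h3 (sq_nonneg _)
    linarith
  have hpsq : ∑ x : Grid d n, (p x)^2 ≤ C₀ / (c₀ * (n:ℝ)^d) := by
    calc ∑ x : Grid d n, (p x)^2 ≤ ∑ x : Grid d n, (p x) * (C₀ / (c₀ * (n:ℝ)^d)) := by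
          refine Finset.sum_le_sum fun x _ => ?_
          rw [sq]
          exact mul_le_mul_of_nonneg_left (hple x) (hpnn x)
    _ = (∑ x : Grid d n, p x) * (C₀ / (c₀ * (n:ℝ)^d)) := by rw [Finset.sum_mul]
    _ = C₀ / (c₀ * (n:ℝ)^d) := by rw [hpsum, one_mul]
  have step3 : ∑ x : Grid d n, ((M:ℝ)*(p x)*(1-(p x))*((N:ℝ)⁻¹)^2
      + ((M:ℝ)*(p x)*(N:ℝ)⁻¹ - cellAvg d n S₀ x)^2)
      ≤ (M:ℝ)*((N:ℝ)⁻¹)^2 + (C₀ / (c₀ * (n:ℝ)^d))*((N:ℝ)⁻¹)^2 := by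
    calc ∑ x : Grid d n, ((M:ℝ)*(p x)*(1-(p x))*((N:ℝ)⁻¹)^2
        + ((M:ℝ)*(p x)*(N:ℝ)⁻¹ - cellAvg d n S₀ x)^2)
        ≤ ∑ x : Grid d n, ((M:ℝ)*(p x)*((N:ℝ)⁻¹)^2 + (p x)^2*((N:ℝ)⁻¹)^2) :=
          Finset.sum_le_sum fun x _ => hterm x
    _ = (M:ℝ)*((N:ℝ)⁻¹)^2 * (∑ x : Grid d n, p x)
        + (∑ x : Grid d n, (p x)^2) * ((N:ℝ)⁻¹)^2 := by
        rw [Finset.sum_add_distrib]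
        congr 1
        · rw [Finset.mul_sum]
          exact Finset.sum_congr rfl fun x _ => by ring
        · rw [Finset.sum_mul]
    _ ≤ (M:ℝ)*((N:ℝ)⁻¹)^2 + (C₀ / (c₀ * (n:ℝ)^d))*((N:ℝ)⁻¹)^2 := by
        rw [hpsum, mul_one]
        have := mul_le_mul_of_nonneg_right hpsq (sq_nonneg ((N:ℝ)⁻¹))
        linarith
  have hM1 : (M:ℝ) ≤ (N:ℝ)*(C₀+1)*(n:ℝ)^d := by
    have h5 : (M:ℝ) - (N:ℝ)*T ≤ 1 := (abs_le.mp hM).2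
    have h6 : (N:ℝ)*T ≤ (N:ℝ)*(C₀*(n:ℝ)^d) := mul_le_mul_of_nonneg_left hTle hNpos.le
    have h7 : (1:ℝ) ≤ (N:ℝ)*(n:ℝ)^d := by
      have : (1:ℝ) ≤ (N:ℝ) := by exact_mod_cast hN
      nlinarith
    nlinarith
  have hfinal : (M:ℝ)*((N:ℝ)⁻¹)^2 + (C₀ / (c₀ * (n:ℝ)^d))*((N:ℝ)⁻¹)^2
      ≤ (C₀ + 1) / ((N : ℝ) * ((n : ℝ)⁻¹) ^ d) + (C₀ / c₀) * ((n : ℝ)⁻¹) ^ d / (N : ℝ) ^ 2 := by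
    have e1 : (C₀ + 1) / ((N : ℝ) * ((n : ℝ)⁻¹) ^ d) = (C₀+1)*(n:ℝ)^d/(N:ℝ) := by
      rw [inv_pow]
      field_simp
    have e2 : (C₀ / c₀) * ((n : ℝ)⁻¹) ^ d / (N : ℝ) ^ 2
        = (C₀ / (c₀ * (n:ℝ)^d))*((N:ℝ)⁻¹)^2 := by
      rw [inv_pow, inv_pow]
      field_simp
    rw [e1, e2]
    have h8 : (M:ℝ)*((N:ℝ)⁻¹)^2 ≤ (C₀+1)*(n:ℝ)^d/(N:ℝ) := by
      rw [inv_pow, div_eq_mul_inv]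
      have h9 : ((N:ℝ)^2)⁻¹ = (N:ℝ)⁻¹ * (N:ℝ)⁻¹ := by
        rw [sq, mul_inv]
      rw [h9, ← mul_assoc]
      have h10 : (M:ℝ)*(N:ℝ)⁻¹ ≤ (C₀+1)*(n:ℝ)^d := by
        have h11 := mul_le_mul_of_nonneg_right hM1 (inv_nonneg.mpr hNpos.le)
        have h12 : (N:ℝ)*(C₀+1)*(n:ℝ)^d*(N:ℝ)⁻¹ = (C₀+1)*(n:ℝ)^d := by
          field_simp
        linarith
      exact mul_le_mul_of_nonneg_right h10 (by positivity)
    linarith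
  calc (∫ ω, (⨆ x : Grid d n,
      |(N : ℝ)⁻¹ * (∑ j, if X j ω = x then (1:ℝ) else 0) - cellAvg d n S₀ x| ^ 2) ∂P)
      ≤ ∑ x : Grid d n, ((M:ℝ)*(p x)*(1-(p x))*((N:ℝ)⁻¹)^2
          + ((M:ℝ)*(p x)*(N:ℝ)⁻¹ - cellAvg d n S₀ x)^2) := step2 ▸ step1
  _ ≤ (M:ℝ)*((N:ℝ)⁻¹)^2 + (C₀ / (c₀ * (n:ℝ)^d))*((N:ℝ)⁻¹)^2 := step3
  _ ≤ _ := hfinal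
end

section
/- Let ν_S > 0, c̄ ≥ 0 and T > 0. Suppose S : [0,T] × D_ε → ℝ is continuous with S(t,x) ≥ 0 and satisfies S(t,x) = S(0,x) − ∫₀ᵗ S(s,x)Γ(s,x)ds + ν_S ∫₀ᵗ Δ_ε S(s,·)(x)ds for all (t,x), where Γ : [0,T] × D_ε → ℝ is measurable with 0 ≤ Γ(s,x) ≤ c̄. Then S(t,x) ≥ e^{−c̄ t} · min_{y ∈ D_ε} S(0,y) for all t ∈ [0,T] and x ∈ D_ε. -/
open MeasureTheory Set

/-- exponential lower bound for a nonnegative solution of the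
susceptible equation with a bounded infection rate `Γ`:
`S(t,x) ≥ e^{-c̄ t} min_y S(0,y)`. -/
theorem susceptible_exponential_lower_bound
    (d : ℕ) (hd : 1 ≤ d) (n : ℕ) [NeZero n] (νS cbar T : ℝ)
    (hνS : 0 < νS) (hcbar : 0 ≤ cbar) (hT : 0 < T)
    (S : ℝ → Grid d n → ℝ) (Γ : ℝ → Grid d n → ℝ)
    (hScont : ∀ x, ContinuousOn (fun t => S t x) (Icc 0 T))
    (hSpos : ∀ t ∈ Icc (0:ℝ) T, ∀ x, 0 ≤ S t x)
    (hΓmeas : ∀ x, Measurable fun s => Γ s x)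
    (hΓ : ∀ s ∈ Icc (0:ℝ) T, ∀ x, Γ s x ∈ Icc 0 cbar)
    (heq : ∀ t ∈ Icc (0:ℝ) T, ∀ x,
      S t x = S 0 x - (∫ s in (0:ℝ)..t, S s x * Γ s x)
        + νS * ∫ s in (0:ℝ)..t, discLap d n (S s) x) :
    ∀ t ∈ Icc (0:ℝ) T, ∀ x,
      Real.exp (-cbar * t) * (⨅ y, S 0 y) ≤ S t x := by
  have hgne : (Finset.univ : Finset (Grid d n)).Nonempty := Finset.univ_nonempty
  -- the running minimum
  set m : ℝ → ℝ := fun t => Finset.univ.inf' hgne (fun y => S t y) with hmdef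
  have hmle : ∀ t x, m t ≤ S t x := fun t x => Finset.inf'_le _ (Finset.mem_univ x)
  have hlem : ∀ t c, (∀ x, c ≤ S t x) → c ≤ m t :=
    fun t c h => Finset.le_inf' _ _ (fun x _ => h x)
  have hmatt : ∀ t, ∃ x, S t x = m t := by
    intro t
    obtain ⟨x, -, hx⟩ := Finset.exists_mem_eq_inf' hgne (fun y => S t y)
    exact ⟨x, hx.symm⟩
  have hmcont : ContinuousOn m (Icc 0 T) :=
    ContinuousOn.finset_inf'_apply hgne (fun i _ => hScont i)
  have h0T : (0:ℝ) ∈ Icc (0:ℝ) T := ⟨le_refl 0, hT.le⟩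
  -- a uniform bound on S
  have hbd : ∀ x : Grid d n, ∃ C, ∀ s ∈ Icc (0:ℝ) T, |S s x| ≤ C := by
    intro x
    obtain ⟨C, hC⟩ := (isCompact_Icc : IsCompact (Icc (0:ℝ) T)).exists_bound_of_continuousOn
      (hScont x)
    exact ⟨C, fun s hs => by simpa using hC s hs⟩
  choose C hC using hbd
  set C0 : ℝ := Finset.univ.sup' hgne C with hC0def
  have hC0 : ∀ s ∈ Icc (0:ℝ) T, ∀ x, |S s x| ≤ C0 :=
    fun s hs x => (hC x s hs).trans (Finset.le_sup' C (Finset.mem_univ x))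
  -- integrability of the two integrands on subintervals of [0,T]
  have hsubIcc : ∀ {a b : ℝ}, a ∈ Icc (0:ℝ) T → b ∈ Icc (0:ℝ) T →
      Set.uIoc a b ⊆ Icc (0:ℝ) T := by
    intro a b ha hb s hs
    rcases hs with ⟨h1, h2⟩
    constructor
    · exact le_trans (le_min ha.1 hb.1) h1.le
    · exact le_trans h2 (max_le ha.2 hb.2)
  have hintΓ : ∀ (x : Grid d n) {a b : ℝ}, a ∈ Icc (0:ℝ) T → b ∈ Icc (0:ℝ) T →
      IntervalIntegrable (fun s => S s x * Γ s x) volume a b := by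
    intro x a b ha hb
    rw [intervalIntegrable_iff]
    have hsub := hsubIcc ha hb
    have hmeasS : AEStronglyMeasurable (fun s => S s x) (volume.restrict (Set.uIoc a b)) :=
      ((hScont x).aestronglyMeasurable measurableSet_Icc).mono_measure
        (Measure.restrict_mono hsub le_rfl)
    have hmeas : AEStronglyMeasurable (fun s => S s x * Γ s x) (volume.restrict (Set.uIoc a b)) :=
      hmeasS.mul (hΓmeas x).aestronglyMeasurable
    refine Integrable.mono' (g := fun _ => C0 * cbar)
      (integrableOn_const measure_Ioc_lt_top.ne) hmeas ?_
    refine (ae_restrict_iff' measurableSet_uIoc).2 (Filter.Eventually.of_forall ?_)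
    intro s hs
    have hsIcc := hsub hs
    have h1 := hC0 s hsIcc x
    have h2 := hΓ s hsIcc x
    have hΓabs : |Γ s x| ≤ cbar := by
      rw [abs_of_nonneg h2.1]; exact h2.2
    rw [Real.norm_eq_abs, abs_mul]
    exact mul_le_mul h1 hΓabs (abs_nonneg _) ((abs_nonneg _).trans h1)
  have hcontΔ : ContinuousOn (fun s => discLap d n (S s)) (Icc 0 T) → True := fun _ => trivial
  have hΔcont : ∀ x : Grid d n,
      ContinuousOn (fun s => discLap d n (S s) x) (Icc (0:ℝ) T) := by
    intro x
    unfold discLap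
    refine continuousOn_const.mul ?_
    refine continuousOn_finset_sum _ (fun i _ => ?_)
    exact ((hScont _).sub (continuousOn_const.mul (hScont x))).add (hScont _)
  have hintΔ : ∀ (x : Grid d n) {a b : ℝ}, a ∈ Icc (0:ℝ) T → b ∈ Icc (0:ℝ) T →
      IntervalIntegrable (fun s => discLap d n (S s) x) volume a b := by
    intro x a b ha hb
    refine ContinuousOn.intervalIntegrable ((hΔcont x).mono ?_)
    intro s hs
    rcases hs with ⟨h1, h2⟩
    exact ⟨le_trans (le_min ha.1 hb.1) h1, le_trans h2 (max_le ha.2 hb.2)⟩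
  -- the integral identity between two times
  have hstep : ∀ (x : Grid d n) {t z : ℝ}, t ∈ Icc (0:ℝ) T → z ∈ Icc (0:ℝ) T →
      S z x - S t x = -(∫ s in t..z, S s x * Γ s x)
        + νS * ∫ s in t..z, discLap d n (S s) x := by
    intro x t z ht hz
    have h1 := heq t ht x
    have h2 := heq z hz x
    have e1 : (∫ s in (0:ℝ)..t, S s x * Γ s x) + (∫ s in t..z, S s x * Γ s x)
        = ∫ s in (0:ℝ)..z, S s x * Γ s x :=
      intervalIntegral.integral_add_adjacent_intervals (hintΓ x h0T ht) (hintΓ x ht hz)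
    have e2 : (∫ s in (0:ℝ)..t, discLap d n (S s) x) + (∫ s in t..z, discLap d n (S s) x)
        = ∫ s in (0:ℝ)..z, discLap d n (S s) x :=
      intervalIntegral.integral_add_adjacent_intervals (hintΔ x h0T ht) (hintΔ x ht hz)
    rw [h1, h2, ← e1, ← e2]
    ring
  -- lower bound for the Laplacian at any point, in terms of the minimum
  set L : ℝ := 2 * d * (n:ℝ)^2 * νS with hLdef
  have hLnn : 0 ≤ L := by positivity
  have hkey : ∀ s ∈ Icc (0:ℝ) T, ∀ x,
      S s x * Γ s x - νS * discLap d n (S s) x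
        ≤ cbar * S s x + L * (S s x - m s) := by
    intro s hs x
    have hΓs := hΓ s hs x
    have hSs := hSpos s hs x
    have h1 : S s x * Γ s x ≤ cbar * S s x := by
      calc S s x * Γ s x ≤ S s x * cbar := mul_le_mul_of_nonneg_left hΓs.2 hSs
      _ = cbar * S s x := mul_comm _ _
    have h2 : (2 * d * (n:ℝ)^2) * (m s - S s x) ≤ discLap d n (S s) x := by
      unfold discLap
      have hsum : ∑ i : Fin d, (2 * m s - 2 * S s x)
          ≤ ∑ i : Fin d, (S s (Function.update x i (x i + 1)) - 2 * S s x
              + S s (Function.update x i (x i - 1))) := by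
        refine Finset.sum_le_sum (fun i _ => ?_)
        have ha := hmle s (Function.update x i (x i + 1))
        have hb := hmle s (Function.update x i (x i - 1))
        linarith
      have hn2 : (0:ℝ) ≤ (n:ℝ)^2 := by positivity
      calc (2 * d * (n:ℝ)^2) * (m s - S s x)
          = (n:ℝ)^2 * ∑ _i : Fin d, (2 * m s - 2 * S s x) := by
            rw [Finset.sum_const]; simp [Finset.card_univ]; ring
        _ ≤ (n:ℝ)^2 * ∑ i : Fin d, (S s (Function.update x i (x i + 1)) - 2 * S s x
              + S s (Function.update x i (x i - 1))) := mul_le_mul_of_nonneg_left hsum hn2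
    have h3 : -(νS * discLap d n (S s) x) ≤ L * (S s x - m s) := by
      have := mul_le_mul_of_nonneg_left h2 hνS.le
      rw [hLdef]
      nlinarith
    linarith
  -- the slope estimate for f = -m
  set f : ℝ → ℝ := fun t => -m t with hfdef
  have hslope : ∀ t ∈ Ico (0:ℝ) T, ∀ r, cbar * m t < r →
      ∃ᶠ z in nhdsWithin t (Ioi t), slope f t z < r := by
    intro t ht r hr
    have htIcc : t ∈ Icc (0:ℝ) T := ⟨ht.1, ht.2.le⟩
    set η : ℝ := (r - cbar * m t) / (3 * cbar + 4 * L + 1) with hηdef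
    have hηpos : 0 < η := div_pos (by linarith) (by positivity)
    -- uniform (in x) continuity at t within [0,T]
    have hev : ∀ᶠ s in nhdsWithin t (Icc 0 T), ∀ x, |S s x - S t x| < η := by
      rw [Filter.eventually_all]
      intro x
      have htt : Filter.Tendsto (fun s => S s x) (nhdsWithin t (Icc 0 T)) (nhds (S t x)) :=
        hScont x t htIcc
      exact htt.eventually (eventually_abs_sub_lt _ hηpos)
    obtain ⟨δ, hδpos, hδ⟩ := Metric.mem_nhdsWithin_iff.1 hev
    refine Filter.Eventually.frequently ?_
    have hIoo : Ioo t (min (t + δ) T) ∈ nhdsWithin t (Ioi t) :=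
      Ioo_mem_nhdsGT_of_mem ⟨le_refl t, lt_min (by linarith) ht.2⟩
    filter_upwards [hIoo] with z hz
    have hzt : t < z := hz.1
    have hzT : z ∈ Icc (0:ℝ) T := ⟨le_trans ht.1 hzt.le, (hz.2.le.trans (min_le_right _ _))⟩
    have hnear : ∀ s ∈ Icc t z, s ∈ Icc (0:ℝ) T ∧ ∀ x, |S s x - S t x| < η := by
      intro s hs
      have hsIcc : s ∈ Icc (0:ℝ) T := ⟨le_trans ht.1 hs.1, le_trans hs.2 hzT.2⟩
      refine ⟨hsIcc, hδ ⟨?_, hsIcc⟩⟩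
      rw [Metric.mem_ball, Real.dist_eq,
        abs_of_nonneg (by linarith [hs.1] : (0:ℝ) ≤ s - t)]
      have : z < t + δ := lt_of_lt_of_le hz.2 (min_le_left _ _)
      linarith [hs.2]
    obtain ⟨xz, hxz⟩ := hmatt z
    obtain ⟨xt, hxt⟩ := hmatt t
    -- S s xz ≤ m t + 3η on [t,z]
    have hSz : ∀ s ∈ Icc t z, S s xz ≤ m t + 3 * η := by
      intro s hs
      obtain ⟨hsIcc, hclose⟩ := hnear s hs
      have h1 := abs_lt.1 (hclose xz)
      have h2 := abs_lt.1 ((hnear z ⟨hzt.le, le_refl z⟩).2 xz)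
      have h3 := abs_lt.1 ((hnear z ⟨hzt.le, le_refl z⟩).2 xt)
      have hmz : m z ≤ m t + η := by
        have : S z xt < S t xt + η := by linarith
        have := hmle z xt
        rw [hxt] at *
        linarith
      -- S t xz ≤ S z xz + η = m z + η
      linarith [hxz ▸ (le_refl (S z xz))]
    have hms : ∀ s ∈ Icc t z, m t - η ≤ m s := by
      intro s hs
      obtain ⟨hsIcc, hclose⟩ := hnear s hs
      refine hlem s _ (fun y => ?_)
      have := abs_lt.1 (hclose y)
      have := hmle t y
      linarith
    -- pointwise estimate for the integrand with x = xz on [t,z]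
    set R : ℝ := cbar * m t + (3 * cbar + 4 * L) * η with hRdef
    have hptw : ∀ s ∈ Icc t z,
        S s xz * Γ s xz - νS * discLap d n (S s) xz ≤ R := by
      intro s hs
      have hsIcc := (hnear s hs).1
      have h1 := hkey s hsIcc xz
      have h2 := hSz s hs
      have h3 := hms s hs
      have h4 : cbar * S s xz ≤ cbar * (m t + 3 * η) :=
        mul_le_mul_of_nonneg_left h2 hcbar
      have h5 : L * (S s xz - m s) ≤ L * (4 * η) := by
        refine mul_le_mul_of_nonneg_left ?_ hLnn
        linarith
      rw [hRdef]; nlinarith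
    -- integral estimate
    have hint : S t xz - S z xz ≤ (z - t) * R := by
      have hs := hstep xz htIcc hzT
      have hdiff : S t xz - S z xz
          = ∫ s in t..z, (S s xz * Γ s xz - νS * discLap d n (S s) xz) := by
        rw [intervalIntegral.integral_sub (hintΓ xz htIcc hzT)
          ((hintΔ xz htIcc hzT).const_mul νS), intervalIntegral.integral_const_mul]
        linarith
      rw [hdiff]
      calc (∫ s in t..z, (S s xz * Γ s xz - νS * discLap d n (S s) xz))
          ≤ ∫ _s in t..z, R := by
            refine intervalIntegral.integral_mono_on hzt.le
              ((hintΓ xz htIcc hzT).sub ((hintΔ xz htIcc hzT).const_mul νS))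
              intervalIntegrable_const hptw
        _ = (z - t) * R := by rw [intervalIntegral.integral_const]; simp [mul_comm]
    -- conclude about the slope
    have hRr : R < r := by
      have : (3 * cbar + 4 * L + 1) * η = r - cbar * m t := by
        rw [hηdef]; field_simp
      rw [hRdef]; nlinarith
    rw [slope_def_field, div_lt_iff₀ (by linarith : (0:ℝ) < z - t)]
    have hfz : f z - f t = m t - m z := by simp [hfdef]; ring
    have h6 : m t ≤ S t xz := hmle t xz
    have h7 : m z = S z xz := hxz.symm
    have h8 : (z - t) * R < (z - t) * r :=
      mul_lt_mul_of_pos_left hRr (by linarith)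
    rw [hfz]
    rw [h7]
    nlinarith [hint]
  -- Gronwall-type comparison, with an ε of room
  have hgron : ∀ ε : ℝ, 0 < ε → ∀ t ∈ Icc (0:ℝ) T,
      f t ≤ -(m 0) * Real.exp (-cbar * t) + ε * Real.exp t := by
    intro ε hε
    set B : ℝ → ℝ := fun t => -(m 0) * Real.exp (-cbar * t) + ε * Real.exp t with hBdef
    set B' : ℝ → ℝ := fun t => (cbar * m 0) * Real.exp (-cbar * t) + ε * Real.exp t with hB'def
    have hB : ∀ x, HasDerivAt B (B' x) x := by
      intro x
      have h1 : HasDerivAt (fun t : ℝ => -cbar * t) (-cbar * 1) x :=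
        (hasDerivAt_id x).const_mul (-cbar)
      have h2 : HasDerivAt (fun t => Real.exp (-cbar * t))
          (Real.exp (-cbar * x) * (-cbar * 1)) x := h1.exp
      have h3 : HasDerivAt (fun t => Real.exp t) (Real.exp x) x := Real.hasDerivAt_exp x
      have := (h2.const_mul (-(m 0))).add (h3.const_mul ε)
      exact this.congr_deriv (by
        show _ = cbar * m 0 * Real.exp (-cbar * x) + ε * Real.exp x; ring)
    have hfc : ContinuousOn f (Icc 0 T) := hmcont.neg
    have ha : f 0 ≤ B 0 := by
      rw [hfdef, hBdef]
      simp
      nlinarith [Real.exp_pos (0:ℝ)]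
    have hbound : ∀ t ∈ Ico (0:ℝ) T, f t = B t → cbar * m t < B' t := by
      intro t ht hfB
      have hmt : m t = m 0 * Real.exp (-cbar * t) - ε * Real.exp t := by
        rw [hfdef] at hfB
        rw [hBdef] at hfB
        simp only at hfB
        linarith
      have hB't : B' t = cbar * m 0 * Real.exp (-cbar * t) + ε * Real.exp t := rfl
      rw [hB't, hmt]
      have he1 : 0 < Real.exp t := Real.exp_pos t
      have he2 : 0 < Real.exp (-cbar * t) := Real.exp_pos _
      nlinarith [mul_nonneg hcbar (mul_nonneg hε.le he1.le), mul_pos hε he1]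
    exact fun t ht =>
      image_le_of_liminf_slope_right_lt_deriv_boundary hfc
        (fun x hx r hr => hslope x hx r hr) ha hB hbound ht
  -- conclude
  intro t ht x
  have hinf : (⨅ y, S 0 y) = m 0 := by
    obtain ⟨x0, hx0⟩ := hmatt 0
    refine le_antisymm ?_ ?_
    · exact hx0 ▸ ciInf_le (Finite.bddBelow_range _) x0
    · exact le_ciInf (fun y => hmle 0 y)
  rw [hinf]
  have hfin : ∀ ε : ℝ, 0 < ε → Real.exp (-cbar * t) * m 0 - ε ≤ S t x := by
    intro ε hε
    have hεt : 0 < ε / Real.exp t := div_pos hε (Real.exp_pos t)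
    have hg := hgron (ε / Real.exp t) hεt t ht
    have hft : f t = -m t := rfl
    rw [hft] at hg
    have h1 : ε / Real.exp t * Real.exp t = ε :=
      div_mul_cancel₀ ε (Real.exp_pos t).ne'
    have hmx := hmle t x
    linarith [hg, h1, hmx]
  by_contra hcon
  push_neg at hcon
  have h2 := hfin ((Real.exp (-cbar * t) * m 0 - S t x) / 2) (by linarith)
  linarith
end

section
/- Let ν_I > 0 and T > 0. Suppose I : [0,T] × D_ε → ℝ is continuous and satisfies I(t,x) = I(0,x) + ∫₀ᵗ g(s,x)ds + ν_I ∫₀ᵗ Δ_ε I(s,·)(x)ds for all (t,x), where g : [0,T] × D_ε → ℝ is measurable with g(s,x) ≥ 0. If u₀ : D_ε → ℝ satisfies 0 ≤ u₀(x) ≤ I(0,x) for all x, then I(t,x) ≥ (e^{tν_IΔ_ε} u₀)(x) for all t ∈ [0,T] and x ∈ D_ε. -/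
open MeasureTheory Set

private lemma lapMat_mulVec (d n : ℕ) [NeZero n] (f : Grid d n → ℝ) (x : Grid d n) :
    (lapMat d n).mulVec f x = discLap d n f x := by
  classical
  simp only [Matrix.mulVec, dotProduct, lapMat, Matrix.of_apply, discLap]
  calc ∑ y, ((n:ℝ)^2 * ∑ i : Fin d,
        ((if Function.update x i (x i + 1) = y then (1:ℝ) else 0)
          - 2 * (if x = y then (1:ℝ) else 0)
          + (if Function.update x i (x i - 1) = y then (1:ℝ) else 0))) * f y
      = ∑ y, (n:ℝ)^2 * ∑ i : Fin d,
        (((if Function.update x i (x i + 1) = y then (1:ℝ) else 0)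
          - 2 * (if x = y then (1:ℝ) else 0)
          + (if Function.update x i (x i - 1) = y then (1:ℝ) else 0)) * f y) := by
        refine Finset.sum_congr rfl fun y _ => ?_
        rw [mul_assoc, Finset.sum_mul]
    _ = (n:ℝ)^2 * ∑ y, ∑ i : Fin d,
        (((if Function.update x i (x i + 1) = y then (1:ℝ) else 0)
          - 2 * (if x = y then (1:ℝ) else 0)
          + (if Function.update x i (x i - 1) = y then (1:ℝ) else 0)) * f y) :=
        (Finset.mul_sum _ _ _).symm
    _ = (n:ℝ)^2 * ∑ i : Fin d, ∑ y,
        (((if Function.update x i (x i + 1) = y then (1:ℝ) else 0)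
          - 2 * (if x = y then (1:ℝ) else 0)
          + (if Function.update x i (x i - 1) = y then (1:ℝ) else 0)) * f y) := by
        rw [Finset.sum_comm]
    _ = (n:ℝ)^2 * ∑ i : Fin d,
        (f (Function.update x i (x i + 1)) - 2 * f x + f (Function.update x i (x i - 1))) := by
        congr 1
        refine Finset.sum_congr rfl fun i _ => ?_
        simp [sub_mul, add_mul, ite_mul, mul_ite, Finset.sum_add_distrib,
          Finset.sum_sub_distrib, Finset.sum_ite_eq, mul_assoc]

private lemma discLap_sub (d n : ℕ) (f g : Grid d n → ℝ) (x : Grid d n) :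
    discLap d n (fun z => f z - g z) x = discLap d n f x - discLap d n g x := by
  simp only [discLap, ← mul_sub, ← Finset.sum_sub_distrib]
  congr 1
  refine Finset.sum_congr rfl fun i _ => ?_
  ring

private lemma discLap_ge (d n : ℕ) {f : Grid d n → ℝ} {c : ℝ} (hc : ∀ y, c ≤ f y)
    (x : Grid d n) :
    2 * (d:ℝ) * (n:ℝ)^2 * (c - f x) ≤ discLap d n f x := by
  have hsum : (d:ℝ) * (2*c - 2*f x) ≤ ∑ i : Fin d,
      (f (Function.update x i (x i + 1)) - 2 * f x + f (Function.update x i (x i - 1))) := by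
    calc (d:ℝ) * (2*c - 2*f x) = ∑ _i : Fin d, (2*c - 2*f x) := by
          rw [Finset.sum_const, Finset.card_univ, Fintype.card_fin, nsmul_eq_mul]
      _ ≤ _ := Finset.sum_le_sum fun i _ => by
          have h1 := hc (Function.update x i (x i + 1))
          have h2 := hc (Function.update x i (x i - 1))
          linarith
  calc 2 * (d:ℝ) * (n:ℝ)^2 * (c - f x) = (n:ℝ)^2 * ((d:ℝ) * (2*c - 2*f x)) := by ring
    _ ≤ discLap d n f x := by
        unfold discLap
        exact mul_le_mul_of_nonneg_left hsum (by positivity)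

private lemma expMulVec_hasDerivAt {N : Type*} [Fintype N] [DecidableEq N]
    (A : Matrix N N ℝ) (u₀ : N → ℝ) (x : N) (t : ℝ) :
    HasDerivAt (fun r : ℝ => (NormedSpace.exp (r • A)).mulVec u₀ x)
      (A.mulVec ((NormedSpace.exp (t • A)).mulVec u₀) x) t := by
  letI : SeminormedRing (Matrix N N ℝ) := Matrix.linftyOpSemiNormedRing
  letI : NormedRing (Matrix N N ℝ) := Matrix.linftyOpNormedRing
  letI : NormedAlgebra ℝ (Matrix N N ℝ) := Matrix.linftyOpNormedAlgebra
  have hexp := hasDerivAt_exp_smul_const' (𝕂 := ℝ) A t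
  let L : Matrix N N ℝ →ₗ[ℝ] ℝ :=
    { toFun := fun M => M.mulVec u₀ x
      map_add' := fun M M' => by simp [Matrix.add_mulVec]
      map_smul' := fun c M => by simp [Matrix.smul_mulVec] }
  have hL := (LinearMap.toContinuousLinearMap L).hasFDerivAt
    (x := NormedSpace.exp (t • A))
  have hcomp := hL.comp_hasDerivAt t hexp
  have heq : (A * NormedSpace.exp (t • A)).mulVec u₀ x
      = A.mulVec ((NormedSpace.exp (t • A)).mulVec u₀) x := by
    rw [Matrix.mulVec_mulVec]
  rw [← heq]
  exact hcomp

private lemma locally_nondecreasing {T δ : ℝ} (hδ : 0 < δ) {h : ℝ → ℝ}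
    (H : ∀ s t : ℝ, 0 ≤ s → s ≤ t → t ≤ T → t - s ≤ δ → h s ≤ h t) :
    ∀ t, 0 ≤ t → t ≤ T → h 0 ≤ h t := by
  have key : ∀ k : ℕ, ∀ t, 0 ≤ t → t ≤ T → t ≤ k * δ → h 0 ≤ h t := by
    intro k
    induction k with
    | zero =>
      intro t h0 hT hk
      norm_num at hk
      have : t = 0 := le_antisymm hk h0
      subst this
      exact le_refl _
    | succ k ih =>
      intro t h0 htT hk
      by_cases hc : t ≤ k * δ
      · exact ih t h0 htT hc
      · push_neg at hc
        set s := max 0 (t - δ) with hs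
        have hs0 : 0 ≤ s := le_max_left _ _
        have hst : s ≤ t := max_le h0 (by linarith)
        have hsk : s ≤ k * δ := by
          apply max_le
          · positivity
          · push_cast at hk; linarith
        have h1 : h 0 ≤ h s := ih s hs0 (hst.trans htT) hsk
        have h2 : h s ≤ h t := H s t hs0 hst htT (by
          have := le_max_right 0 (t - δ); linarith)
        linarith
  intro t h0 htT
  obtain ⟨k, hk⟩ := exists_nat_ge (T / δ)
  refine key k t h0 htT (htT.trans ?_)
  rw [div_le_iff₀ hδ] at hk
  linarith

open Filter in
private lemma F_mono {f : ℝ → ℝ} {T : ℝ} (hT : (0:ℝ) ≤ T)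
    (hmeas : Measurable f) (hf : ∀ s ∈ Icc (0:ℝ) T, 0 ≤ f s)
    (hcont : ContinuousOn (fun t => ∫ u in (0:ℝ)..t, f u) (Icc 0 T)) :
    ∀ ⦃s t : ℝ⦄, s ∈ Icc (0:ℝ) T → t ∈ Icc (0:ℝ) T → s ≤ t →
      (∫ u in (0:ℝ)..s, f u) ≤ ∫ u in (0:ℝ)..t, f u := by
  set F : ℝ → ℝ := fun t => ∫ u in (0:ℝ)..t, f u with hF
  set φ : ℝ → ENNReal := fun s => ENNReal.ofReal (f s) with hφ
  have hφm : Measurable φ := ENNReal.measurable_ofReal.comp hmeas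
  set μ : Measure ℝ := volume.withDensity φ with hμ
  have hiff : ∀ u ∈ Icc (0:ℝ) T, (IntegrableOn f (Ioc 0 u) ↔ μ (Ioc 0 u) < ⊤) := by
    intro u hu
    have hset : ∫⁻ a in Ioc 0 u, ENNReal.ofReal ‖f a‖ = μ (Ioc 0 u) := by
      rw [hμ, withDensity_apply _ measurableSet_Ioc]
      refine setLIntegral_congr_fun_ae measurableSet_Ioc (ae_of_all _ fun a ha => ?_)
      rw [Real.norm_eq_abs, abs_of_nonneg (hf a ⟨ha.1.le, ha.2.trans hu.2⟩)]
    constructor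
    · intro h
      rw [← hset]
      exact (hasFiniteIntegral_iff_norm f).mp h.2
    · intro h
      exact ⟨hmeas.aestronglyMeasurable.restrict, (hasFiniteIntegral_iff_norm f).mpr (hset ▸ h)⟩
  have hFval : ∀ u ∈ Icc (0:ℝ) T, IntegrableOn f (Ioc 0 u) → F u = (μ (Ioc 0 u)).toReal := by
    intro u hu hint
    rw [hF]
    simp only
    rw [intervalIntegral.integral_of_le hu.1,
      integral_eq_lintegral_of_nonneg_ae
        ((ae_restrict_iff' measurableSet_Ioc).mpr
          (ae_of_all _ fun a ha => hf a ⟨ha.1.le, ha.2.trans hu.2⟩))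
        hmeas.aestronglyMeasurable.restrict]
    congr 1
    rw [hμ, withDensity_apply _ measurableSet_Ioc]
  set S : Set ℝ := {u | u ∈ Icc (0:ℝ) T ∧ IntegrableOn f (Ioc 0 u)} with hS
  have h0S : (0:ℝ) ∈ S := ⟨⟨le_refl _, hT⟩, by simp [IntegrableOn]⟩
  have hSne : S.Nonempty := ⟨0, h0S⟩
  have hSbdd : BddAbove S := ⟨T, fun u hu => hu.1.2⟩
  set τ := sSup S with hτdef
  have hτmem : τ ∈ Icc (0:ℝ) T := ⟨le_csSup hSbdd h0S, csSup_le hSne fun u hu => hu.1.2⟩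
  have hτS : IntegrableOn f (Ioc 0 τ) := by
    rw [hiff τ hτmem]
    by_contra hcon
    push_neg at hcon
    have htop : μ (Ioc 0 τ) = ⊤ := top_le_iff.mp hcon
    obtain ⟨u, humono, hutend, huS⟩ := exists_seq_tendsto_sSup hSne hSbdd
    have huIcc : ∀ k, u k ∈ Icc (0:ℝ) T := fun k => (huS k).1
    have hsub : Ioo 0 τ ⊆ ⋃ k, Ioc 0 (u k) := by
      intro y hy
      obtain ⟨k, hk⟩ := (hutend.eventually (eventually_gt_nhds hy.2)).exists
      exact mem_iUnion.mpr ⟨k, hy.1, hk.le⟩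
    have hpt : μ {τ} = 0 :=
      withDensity_absolutelyContinuous volume φ (measure_singleton τ)
    have hμIoo : μ (Ioo 0 τ) = ⊤ := by
      have h1 : μ (Ioc 0 τ) ≤ μ (Ioo 0 τ) + μ {τ} := by
        refine (measure_mono fun y hy => ?_).trans (measure_union_le _ _)
        rcases hy.2.lt_or_eq with h | h
        · exact Or.inl ⟨hy.1, h⟩
        · exact Or.inr h
      rw [hpt, add_zero] at h1
      exact top_le_iff.mp (htop ▸ h1)
    have hmonoset : Monotone fun k => Ioc (0:ℝ) (u k) :=
      fun a b hab => Ioc_subset_Ioc_right (humono hab)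
    have hdir : Directed (· ⊆ ·) (fun k => Ioc (0:ℝ) (u k)) := hmonoset.directed_le
    have hsup : (⨆ k, μ (Ioc 0 (u k))) = ⊤ := by
      have h1 : (⊤ : ENNReal) ≤ μ (⋃ k, Ioc 0 (u k)) := hμIoo ▸ measure_mono hsub
      rw [hdir.measure_iUnion] at h1
      exact top_le_iff.mp h1
    have hmonoa : Monotone fun k => μ (Ioc (0:ℝ) (u k)) :=
      fun a b hab => measure_mono (Ioc_subset_Ioc_right (humono hab))
    have htendtop : Tendsto (fun k => μ (Ioc (0:ℝ) (u k))) atTop (nhds ⊤) :=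
      hsup ▸ tendsto_atTop_iSup hmonoa
    have hFτ : Tendsto (fun k => F (u k)) atTop (nhds (F τ)) :=
      (hcont τ hτmem).tendsto.comp
        (tendsto_nhdsWithin_of_tendsto_nhds_of_eventually_within u hutend
          (Eventually.of_forall huIcc))
    have hFn : ∀ k, F (u k) = (μ (Ioc 0 (u k))).toReal :=
      fun k => hFval _ (huIcc k) (huS k).2
    have hFtop : Tendsto (fun k => F (u k)) atTop atTop := by
      rw [tendsto_atTop]
      intro b
      have hev : ∀ᶠ k in atTop, ENNReal.ofReal b < μ (Ioc 0 (u k)) :=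
        htendtop.eventually (eventually_gt_nhds (ENNReal.ofReal_lt_top))
      filter_upwards [hev] with k hk
      rw [hFn k]
      have hne : μ (Ioc 0 (u k)) ≠ ⊤ := ((hiff _ (huIcc k)).mp (huS k).2).ne
      rcases le_or_gt b 0 with hb | hb
      · exact hb.trans ENNReal.toReal_nonneg
      · have : b = (ENNReal.ofReal b).toReal := (ENNReal.toReal_ofReal hb.le).symm
        rw [this]
        exact ENNReal.toReal_mono hne hk.le
    exact not_tendsto_nhds_of_tendsto_atTop hFtop (F τ) hFτ
  have hstep : ∀ s t : ℝ, s ∈ Icc (0:ℝ) T → t ∈ Icc (0:ℝ) T → s ≤ t →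
      IntegrableOn f (Ioc 0 t) → F s ≤ F t := by
    intro s t hs ht hst hint
    have h1 : IntervalIntegrable f volume 0 s := by
      rw [intervalIntegrable_iff, uIoc_of_le hs.1]
      exact hint.mono_set (Ioc_subset_Ioc_right hst)
    have h2 : IntervalIntegrable f volume s t := by
      rw [intervalIntegrable_iff, uIoc_of_le hst]
      exact hint.mono_set (Ioc_subset_Ioc_left hs.1)
    have hadd := intervalIntegral.integral_add_adjacent_intervals h1 h2
    have hnn : 0 ≤ ∫ u in s..t, f u := intervalIntegral.integral_nonneg hst
      (fun y hy => hf y ⟨hs.1.trans hy.1, hy.2.trans ht.2⟩)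
    have : F s + ∫ u in s..t, f u = F t := hadd
    linarith
  intro s t hs ht hst
  by_cases hct : IntegrableOn f (Ioc 0 t)
  · exact hstep s t hs ht hst hct
  · have hτt : τ < t := by
      by_contra hle
      push_neg at hle
      exact hct (hτS.mono_set (Ioc_subset_Ioc_right hle))
    have hFzero : ∀ r, τ < r → r ∈ Icc (0:ℝ) T → F r = 0 := by
      intro r hr hrIcc
      have hni : ¬ IntervalIntegrable f volume 0 r := by
        rw [intervalIntegrable_iff, uIoc_of_le hrIcc.1]
        intro hcontra
        exact absurd (le_csSup hSbdd (⟨hrIcc, hcontra⟩ : r ∈ S)) (not_le.mpr hr)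
      exact intervalIntegral.integral_undef hni
    have hFt : F t = 0 := hFzero t hτt ht
    have hτT : τ < T := lt_of_lt_of_le hτt ht.2
    have hFτ0 : F τ = 0 := by
      set r : ℕ → ℝ := fun k => τ + (T - τ)/(k+1) with hr
      have hTτ : 0 < T - τ := by linarith
      have hrgt : ∀ k, τ < r k := fun k => lt_add_of_pos_right _ (by positivity)
      have hrmem : ∀ k, r k ∈ Icc (0:ℝ) T := by
        intro k
        constructor
        · have := (hrgt k); linarith [hτmem.1]
        · have h1 : (T - τ)/((k:ℝ)+1) ≤ T - τ := by
            apply div_le_self hTτ.le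
            have : (0:ℝ) ≤ (k:ℝ) := Nat.cast_nonneg k
            linarith
          simp only [hr]
          linarith
      have hrtend : Tendsto r atTop (nhds τ) := by
        have h1 : Tendsto (fun k : ℕ => (T - τ) * (1/((k:ℝ)+1))) atTop (nhds ((T - τ) * 0)) :=
          tendsto_const_nhds.mul tendsto_one_div_add_atTop_nhds_zero_nat
        have h2 := tendsto_const_nhds (x := τ) (f := atTop (α := ℕ)) |>.add h1
        simp only [mul_zero, add_zero] at h2
        convert h2 using 2 with k
        simp [hr, div_eq_mul_inv, mul_comm]
      have h1 : Tendsto (fun k => F (r k)) atTop (nhds (F τ)) :=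
        (hcont τ hτmem).tendsto.comp
          (tendsto_nhdsWithin_of_tendsto_nhds_of_eventually_within r hrtend
            (Eventually.of_forall hrmem))
      have h2 : (fun k => F (r k)) = fun _ => 0 :=
        funext fun k => hFzero (r k) (hrgt k) (hrmem k)
      rw [h2] at h1
      exact (tendsto_nhds_unique h1 tendsto_const_nhds)
    show F s ≤ F t
    have hFs0 : F s ≤ 0 := by
      by_cases hsτ : s ≤ τ
      · have h3 := hstep s τ hs hτmem hsτ hτS
        linarith [hFτ0]
      · rw [hFzero s (not_le.mp hsτ) hs]
    linarith [hFt]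

set_option maxHeartbeats 1000000 in
/-- comparison principle for the infected equation: if the source term `g`
is nonnegative and `0 ≤ u₀ ≤ I(0,·)`, then `I(t,·) ≥ e^{tν_IΔ_ε} u₀` on `[0,T]`. -/
theorem infected_heat_comparison
    (d : ℕ) (hd : 1 ≤ d) (n : ℕ) [NeZero n] (νI T : ℝ)
    (hνI : 0 < νI) (hT : 0 < T)
    (I : ℝ → Grid d n → ℝ) (g : ℝ → Grid d n → ℝ)
    (hIcont : ∀ x, ContinuousOn (fun t => I t x) (Icc 0 T))
    (hgmeas : ∀ x, Measurable fun s => g s x)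
    (hg : ∀ s ∈ Icc (0:ℝ) T, ∀ x, 0 ≤ g s x)
    (heq : ∀ t ∈ Icc (0:ℝ) T, ∀ x,
      I t x = I 0 x + (∫ s in (0:ℝ)..t, g s x)
        + νI * ∫ s in (0:ℝ)..t, discLap d n (I s) x)
    (u₀ : Grid d n → ℝ) (hu₀ : ∀ x, 0 ≤ u₀ x ∧ u₀ x ≤ I 0 x) :
    ∀ t ∈ Icc (0:ℝ) T, ∀ x,
      (NormedSpace.exp (t • νI • lapMat d n)).mulVec u₀ x ≤ I t x := by
  classical
  have hT0 : (0:ℝ) ≤ T := hT.le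
  set A : Matrix (Grid d n) (Grid d n) ℝ := νI • lapMat d n with hA
  set v : ℝ → Grid d n → ℝ := fun t => (NormedSpace.exp (t • A)).mulVec u₀ with hv
  have hvderiv : ∀ (x : Grid d n) (t : ℝ),
      HasDerivAt (fun r => v r x) (νI * discLap d n (v t) x) t := by
    intro x t
    have h := expMulVec_hasDerivAt A u₀ x t
    have heq2 : A.mulVec (v t) x = νI * discLap d n (v t) x := by
      rw [hA, Matrix.smul_mulVec, Pi.smul_apply, lapMat_mulVec, smul_eq_mul]
    rw [heq2] at h
    exact h
  have hvcont : ∀ x, Continuous fun r => v r x :=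
    fun x => continuous_iff_continuousAt.mpr fun t => (hvderiv x t).continuousAt
  set w : ℝ → Grid d n → ℝ := fun t x => I t x - v t x with hw
  have hwcont : ∀ x, ContinuousOn (fun t => w t x) (Icc 0 T) :=
    fun x => (hIcont x).sub (hvcont x).continuousOn
  have hw0 : ∀ x, 0 ≤ w 0 x := by
    intro x
    have hv0 : v 0 x = u₀ x := by
      rw [hv]
      simp only [zero_smul, NormedSpace.exp_zero, Matrix.one_mulVec]
    simp only [hw]
    rw [hv0]
    linarith [(hu₀ x).2]
  -- continuity of discrete laplacians
  have hdiscI : ∀ x, ContinuousOn (fun r => discLap d n (I r) x) (Icc 0 T) := by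
    intro x
    apply ContinuousOn.mul continuousOn_const
    apply continuousOn_finset_sum
    intro i _
    exact ((hIcont _).sub (continuousOn_const.mul (hIcont x))).add (hIcont _)
  have hdiscv : ∀ x, Continuous (fun r => discLap d n (v r) x) := by
    intro x
    apply Continuous.mul continuous_const
    apply continuous_finset_sum
    intro i _
    exact ((hvcont _).sub (continuous_const.mul (hvcont x))).add (hvcont _)
  have hdiscw : ∀ x, ContinuousOn (fun r => discLap d n (w r) x) (Icc 0 T) := by
    intro x
    apply ContinuousOn.mul continuousOn_const
    apply continuousOn_finset_sum
    intro i _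
    exact ((hwcont _).sub (continuousOn_const.mul (hwcont x))).add (hwcont _)
  -- integral identity for v
  have hvint : ∀ (x : Grid d n) (s t : ℝ),
      v t x - v s x = ∫ r in s..t, νI * discLap d n (v r) x := by
    intro x s t
    exact (intervalIntegral.integral_eq_sub_of_hasDerivAt
      (fun r _ => hvderiv x r)
      ((continuous_const.mul (hdiscv x)).intervalIntegrable s t)).symm
  -- monotonicity of the g-primitive
  have hgmono : ∀ x : Grid d n, ∀ ⦃s t : ℝ⦄, s ∈ Icc (0:ℝ) T → t ∈ Icc (0:ℝ) T → s ≤ t →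
      (∫ u in (0:ℝ)..s, g u x) ≤ ∫ u in (0:ℝ)..t, g u x := by
    intro x
    apply F_mono hT0 (hgmeas x) (fun s hs => hg s hs x)
    have hprim : ContinuousOn (fun t => ∫ r in (0:ℝ)..t, discLap d n (I r) x) (Icc 0 T) := by
      have h1 : IntegrableOn (fun r => discLap d n (I r) x) (uIcc 0 T) volume := by
        rw [uIcc_of_le hT0]
        exact (hdiscI x).integrableOn_compact isCompact_Icc
      have := intervalIntegral.continuousOn_primitive_interval h1
      rwa [uIcc_of_le hT0] at this
    have hrhs : ContinuousOn
        (fun t => I t x - I 0 x - νI * ∫ r in (0:ℝ)..t, discLap d n (I r) x) (Icc 0 T) :=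
      ((hIcont x).sub continuousOn_const).sub (continuousOn_const.mul hprim)
    apply ContinuousOn.congr hrhs
    intro t ht
    have h := heq t ht x
    simp only
    linarith
  -- key integral inequality for w
  have hkey : ∀ (x : Grid d n) (s t : ℝ), 0 ≤ s → s ≤ t → t ≤ T →
      νI * ∫ r in s..t, discLap d n (w r) x ≤ w t x - w s x := by
    intro x s t hs0 hst htT
    have hsI : s ∈ Icc (0:ℝ) T := ⟨hs0, hst.trans htT⟩
    have htI : t ∈ Icc (0:ℝ) T := ⟨hs0.trans hst, htT⟩
    have hsub : uIcc s t ⊆ Icc (0:ℝ) T := by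
      rw [uIcc_of_le hst]; exact Icc_subset_Icc hs0 htT
    have hsub1 : uIcc 0 s ⊆ Icc (0:ℝ) T := by
      rw [uIcc_of_le hs0]; exact Icc_subset_Icc (le_refl _) hsI.2
    have hint1 : IntervalIntegrable (fun r => discLap d n (I r) x) volume 0 s :=
      ((hdiscI x).mono hsub1).intervalIntegrable
    have hint2 : IntervalIntegrable (fun r => discLap d n (I r) x) volume s t :=
      ((hdiscI x).mono hsub).intervalIntegrable
    have hIst : νI * ∫ r in s..t, discLap d n (I r) x ≤ I t x - I s x := by
      have h1 := heq t htI x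
      have h2 := heq s hsI x
      have hadd := intervalIntegral.integral_add_adjacent_intervals hint1 hint2
      have hgm := hgmono x hsI htI hst
      nlinarith [hadd, h1, h2, hgm]
    have hvst : v t x - v s x = νI * ∫ r in s..t, discLap d n (v r) x := by
      rw [hvint x s t, intervalIntegral.integral_const_mul]
    have hintv : IntervalIntegrable (fun r => discLap d n (v r) x) volume s t :=
      (hdiscv x).continuousOn.intervalIntegrable
    have hsplit : (∫ r in s..t, discLap d n (w r) x)
        = (∫ r in s..t, discLap d n (I r) x) - ∫ r in s..t, discLap d n (v r) x := by
      rw [← intervalIntegral.integral_sub hint2 hintv]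
      apply intervalIntegral.integral_congr
      intro r _
      exact discLap_sub d n (I r) (v r) x
    rw [hsplit, mul_sub]
    simp only [hw]
    linarith [hIst, hvst.le, hvst.ge]
  -- minimum over the grid
  have hne : (Finset.univ : Finset (Grid d n)).Nonempty := Finset.univ_nonempty
  set m : ℝ → ℝ := fun t => Finset.univ.inf' hne (w t) with hm
  have hm_le : ∀ t x, m t ≤ w t x := fun t x => Finset.inf'_le _ (Finset.mem_univ x)
  have hd' : (0:ℝ) < (d:ℝ) := by exact_mod_cast hd
  have hn0 : (0:ℝ) < (n:ℝ) := by
    have := Nat.pos_of_ne_zero (NeZero.ne n)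
    exact_mod_cast this
  set K : ℝ := νI * (4 * (d:ℝ) * (n:ℝ)^2) with hK
  have hK0 : 0 < K := by rw [hK]; positivity
  have main : ∀ ε : ℝ, 0 < ε → ∀ t, 0 ≤ t → t ≤ T → m 0 - K * ε * T ≤ m t := by
    intro ε hε
    have hUC : ∀ x : Grid d n, ∃ δ > 0, ∀ a ∈ Icc (0:ℝ) T, ∀ b ∈ Icc (0:ℝ) T,
        dist a b < δ → dist (w a x) (w b x) < ε := by
      intro x
      exact (Metric.uniformContinuousOn_iff).mp
        (isCompact_Icc.uniformContinuousOn_of_continuous (hwcont x)) ε hε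
    choose δf hδf0 hδf using hUC
    set δ := Finset.univ.inf' hne δf with hδdef
    have hδ0 : 0 < δ := (Finset.lt_inf'_iff hne).mpr fun x _ => hδf0 x
    have hδle : ∀ x, δ ≤ δf x := fun x => Finset.inf'_le _ (Finset.mem_univ x)
    have hloc : ∀ s t : ℝ, 0 ≤ s → s ≤ t → t ≤ T → t - s ≤ δ/2 →
        m s + K*ε*s ≤ m t + K*ε*t := by
      intro s t hs0 hst htT hdel
      obtain ⟨x₀, -, hx₀⟩ := Finset.exists_mem_eq_inf' hne (w t)
      have htI : t ∈ Icc (0:ℝ) T := ⟨hs0.trans hst, htT⟩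
      have hbound : ∀ r ∈ Icc s t, -(4*(d:ℝ)*(n:ℝ)^2*ε) ≤ discLap d n (w r) x₀ := by
        intro r hr
        have hrI : r ∈ Icc (0:ℝ) T := ⟨hs0.trans hr.1, hr.2.trans htT⟩
        have hdist : dist r t < δ := by
          rw [Real.dist_eq, abs_of_nonpos (by linarith [hr.2])]
          linarith [hr.1]
        have hlow : ∀ y, m t - ε ≤ w r y := by
          intro y
          have h1 := hδf y r hrI t htI (lt_of_lt_of_le hdist (hδle y))
          rw [Real.dist_eq] at h1
          have h2 := abs_lt.mp h1
          have h3 := hm_le t y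
          linarith [h2.1]
        have h3 := discLap_ge d n hlow x₀
        have h4 : w r x₀ ≤ m t + ε := by
          have h1 := hδf x₀ r hrI t htI (lt_of_lt_of_le hdist (hδle x₀))
          rw [Real.dist_eq] at h1
          have h2 := abs_lt.mp h1
          have : m t = w t x₀ := hx₀
          linarith [h2.2]
        nlinarith [h3, h4, sq_nonneg ((n:ℝ)), mul_pos hd' (mul_pos hn0 hn0)]
      have hintw : IntervalIntegrable (fun r => discLap d n (w r) x₀) volume s t :=
        ((hdiscw x₀).mono (by rw [uIcc_of_le hst]; exact Icc_subset_Icc hs0 htT)).intervalIntegrable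
      have hIle : (∫ _r in s..t, (-(4*(d:ℝ)*(n:ℝ)^2*ε)))
          ≤ ∫ r in s..t, discLap d n (w r) x₀ :=
        intervalIntegral.integral_mono_on hst intervalIntegrable_const hintw hbound
      rw [intervalIntegral.integral_const, smul_eq_mul] at hIle
      have h6 := hkey x₀ s t hs0 hst htT
      have h7 : νI * ((t - s) * (-(4*(d:ℝ)*(n:ℝ)^2*ε)))
          ≤ νI * ∫ r in s..t, discLap d n (w r) x₀ :=
        mul_le_mul_of_nonneg_left hIle hνI.le
      have h8 := hm_le s x₀
      have h9 : m t = w t x₀ := hx₀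
      have h10 : νI * ((t - s) * (-(4*(d:ℝ)*(n:ℝ)^2*ε))) = -(K*ε*(t-s)) := by
        rw [hK]; ring
      rw [h10] at h7
      linarith
    intro t ht0 htT
    have hchain := locally_nondecreasing (T := T) (half_pos hδ0)
      (h := fun r => m r + K*ε*r) hloc t ht0 htT
    simp only [mul_zero, add_zero] at hchain
    have hKt : K*ε*t ≤ K*ε*T := by
      apply mul_le_mul_of_nonneg_left htT
      positivity
    linarith
  intro t ht x
  have hm0 : 0 ≤ m 0 := by
    rw [hm]
    exact (Finset.le_inf'_iff hne _).mpr fun y _ => hw0 y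
  have hmt : m 0 ≤ m t := by
    by_contra hcon
    push_neg at hcon
    have hd2 : 0 < (m 0 - m t) / (2*K*T) := by
      apply div_pos (by linarith)
      positivity
    have h := main _ hd2 t ht.1 ht.2
    have heq3 : K * ((m 0 - m t)/(2*K*T)) * T = (m 0 - m t)/2 := by
      field_simp
    rw [heq3] at h
    linarith
  have hfin := le_trans (hm0.trans hmt) (hm_le t x)
  simp only [hw] at hfin
  have hgoal : v t x ≤ I t x := by linarith
  exact hgoal
end
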